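/- arXiv:1501.03412 — 7 statements merged into one kernel-verified Lean document; each statement's English description precedes it below -/
import Mathlib

section
/- The integral over the real line ∫_{−∞}^{∞} [ −f(x)·ln f(x) − (1−f(x))·ln(1−f(x)) ] dx, with f(x) = (1 + e^x)⁻¹, converges and equals π²/3. -/
open MeasureTheory Set Real

namespace FermiEntropyAux

noncomputable def A : ℝ → ℝ := fun u => -Real.log (1 - u) * u⁻¹

noncomputable def F : ℕ → ℝ → ℝ := fun n u => u ^ n / (n + 1)

lemma hA_sum {u : ℝ} (hu : u ∈ Ioo (0:ℝ) 1) : HasSum (fun n => F n u) (A u) := by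
  obtain ⟨h0, h1⟩ := hu
  have habs : |u| < 1 := by rw [abs_of_pos h0]; exact h1
  have h := (Real.hasSum_pow_div_log_of_abs_lt_one habs).mul_right u⁻¹
  have : (fun n : ℕ => u ^ (n + 1) / (n + 1) * u⁻¹) = fun n => F n u := by
    funext n
    simp only [F]
    field_simp [F, pow_succ]
    ring
  rw [this] at h
  exact h

lemma hF_nonneg {n : ℕ} {u : ℝ} (hu : u ∈ Ioo (0:ℝ) 1) : 0 ≤ F n u := by
  have : (0:ℝ) < n + 1 := by positivity
  exact div_nonneg (pow_nonneg hu.1.le n) this.le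

lemma hF_int (n : ℕ) : IntegrableOn (F n) (Ioo (0:ℝ) 1) := by
  have : Continuous (F n) := by
    unfold F; exact (continuous_pow n).div_const _
  exact (this.integrableOn_Icc (a := 0) (b := 1)).mono_set Ioo_subset_Icc_self

lemma hF_integral (n : ℕ) : ∫ u in Ioo (0:ℝ) 1, F n u = 1 / ((n : ℝ) + 1) ^ 2 := by
  rw [← integral_Ioc_eq_integral_Ioo, ← intervalIntegral.integral_of_le zero_le_one]
  unfold F
  rw [intervalIntegral.integral_div, integral_pow]
  have : ((n:ℝ) + 1) ≠ 0 := by positivity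
  field_simp
  ring

lemma hF_lintegral (n : ℕ) :
    ∫⁻ u in Ioo (0:ℝ) 1, ‖F n u‖₊ = ENNReal.ofReal (1 / ((n : ℝ) + 1) ^ 2) := by
  rw [← hF_integral n,
    MeasureTheory.ofReal_integral_eq_lintegral_ofReal (hF_int n)
      ((ae_restrict_iff' measurableSet_Ioo).2 (Filter.Eventually.of_forall
        fun u hu => hF_nonneg hu))]
  refine lintegral_congr_ae ((ae_restrict_iff' measurableSet_Ioo).2
    (Filter.Eventually.of_forall fun u hu => ?_))
  show (‖F n u‖₊ : ENNReal) = ENNReal.ofReal (F n u)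
  exact Real.enorm_eq_ofReal (hF_nonneg (n := n) hu)

lemma hzeta : HasSum (fun n : ℕ => 1 / ((n : ℝ) + 1) ^ 2) (Real.pi ^ 2 / 6) := by
  have h' : HasSum (fun n : ℕ => (1:ℝ) / (((n + 1 : ℕ)) : ℝ) ^ 2) (Real.pi ^ 2 / 6) := by
    refine (hasSum_nat_add_iff (f := fun n : ℕ => (1:ℝ) / (n : ℝ) ^ 2) (g := Real.pi ^ 2 / 6)
      1).2 ?_
    simpa using hasSum_zeta_two
  convert h' using 2 with n
  push_cast
  ring

lemma hsummable : Summable (fun n : ℕ => 1 / ((n : ℝ) + 1) ^ 2) := hzeta.summable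

lemma hsum_lintegral_ne_top :
    ∑' n : ℕ, ∫⁻ u in Ioo (0:ℝ) 1, ‖F n u‖₊ ≠ ⊤ := by
  have : ∀ n : ℕ, ∫⁻ u in Ioo (0:ℝ) 1, ‖F n u‖₊ = ENNReal.ofReal (1 / ((n : ℝ) + 1) ^ 2) :=
    hF_lintegral
  rw [tsum_congr this, ← ENNReal.ofReal_tsum_of_nonneg (fun n => by positivity) hsummable]
  exact ENNReal.ofReal_ne_top

lemma integrableOn_A : IntegrableOn A (Ioo (0:ℝ) 1) := by
  constructor
  · exact (((Real.measurable_log.comp (measurable_const.sub measurable_id)).neg.mul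
      measurable_inv).aestronglyMeasurable)
  · rw [HasFiniteIntegral]
    have key : ∫⁻ u in Ioo (0:ℝ) 1, ‖A u‖ₑ = ∑' n : ℕ, ∫⁻ u in Ioo (0:ℝ) 1, ‖F n u‖ₑ := by
      rw [← MeasureTheory.lintegral_tsum (fun n => ((hF_int n).aestronglyMeasurable.enorm))]
      refine lintegral_congr_ae ((ae_restrict_iff' measurableSet_Ioo).2
        (Filter.Eventually.of_forall fun u hu => ?_))
      show (‖A u‖ₑ : ENNReal) = ∑' n : ℕ, (‖F n u‖ₑ : ENNReal)
      have hsum := hA_sum hu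
      have hAnn : 0 ≤ A u := hsum.nonneg (fun n => hF_nonneg hu)
      rw [Real.enorm_eq_ofReal hAnn, ← hsum.tsum_eq,
        ENNReal.ofReal_tsum_of_nonneg (fun n => hF_nonneg hu) hsum.summable]
      exact tsum_congr fun n => (Real.enorm_eq_ofReal (hF_nonneg hu)).symm
    rw [key, lt_top_iff_ne_top]
    exact hsum_lintegral_ne_top

lemma integral_A : ∫ u in Ioo (0:ℝ) 1, A u = Real.pi ^ 2 / 6 := by
  have h1 : ∫ u in Ioo (0:ℝ) 1, A u = ∫ u in Ioo (0:ℝ) 1, ∑' n : ℕ, F n u :=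
    setIntegral_congr_fun measurableSet_Ioo (fun u hu => ((hA_sum hu).tsum_eq).symm)
  rw [h1, MeasureTheory.integral_tsum (fun n => (hF_int n).aestronglyMeasurable)
    hsum_lintegral_ne_top]
  rw [tsum_congr hF_integral]
  exact hzeta.tsum_eq

noncomputable def B : ℝ → ℝ := fun u => -Real.log u * (1 - u)⁻¹

lemma hrefl : ∀ x ∈ Ioo (0:ℝ) 1, HasDerivWithinAt (fun u : ℝ => 1 - u) (-1 : ℝ)
    (Ioo (0:ℝ) 1) x := fun x _ =>
  ((hasDerivAt_id x).const_sub 1).hasDerivWithinAt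

lemma hrefl_inj : InjOn (fun u : ℝ => 1 - u) (Ioo (0:ℝ) 1) := fun a _ b _ h => by
  dsimp at h; linarith

lemma hrefl_img : (fun u : ℝ => 1 - u) '' Ioo (0:ℝ) 1 = Ioo (0:ℝ) 1 := by
  rw [show (fun u : ℝ => 1 - u) = (fun u : ℝ => (1:ℝ) - u) from rfl, Set.image_const_sub_Ioo]
  norm_num

lemma B_eq : EqOn (fun u => |(-1 : ℝ)| • A (1 - u)) B (Ioo (0:ℝ) 1) := by
  intro u _
  simp [A, B, sub_sub_cancel]

lemma integrableOn_B : IntegrableOn B (Ioo (0:ℝ) 1) := by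
  have h := (integrableOn_image_iff_integrableOn_abs_deriv_smul measurableSet_Ioo
    hrefl hrefl_inj A).1 (by rw [hrefl_img]; exact integrableOn_A)
  exact (h.congr_fun B_eq measurableSet_Ioo)

lemma integral_B : ∫ u in Ioo (0:ℝ) 1, B u = Real.pi ^ 2 / 6 := by
  have h := integral_image_eq_integral_abs_deriv_smul measurableSet_Ioo hrefl hrefl_inj A
  rw [hrefl_img, integral_A] at h
  rw [← setIntegral_congr_fun measurableSet_Ioo B_eq, ← h]

noncomputable def φ : ℝ → ℝ := fun u => Real.log (1 - u) - Real.log u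

lemma fermi_phi {u : ℝ} (hu : u ∈ Ioo (0:ℝ) 1) : (1 + Real.exp (φ u))⁻¹ = u := by
  obtain ⟨h0, h1⟩ := hu
  have hu0 : u ≠ 0 := ne_of_gt h0
  have h1u : (0:ℝ) < 1 - u := by linarith
  have : Real.exp (φ u) = (1 - u) / u := by
    rw [φ, Real.exp_sub, Real.exp_log h1u, Real.exp_log h0]
  rw [this]
  field_simp
  ring

lemma phi_deriv : ∀ u ∈ Ioo (0:ℝ) 1,
    HasDerivWithinAt φ (-(1 - u)⁻¹ - u⁻¹) (Ioo (0:ℝ) 1) u := by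
  intro u hu
  obtain ⟨h0, h1⟩ := hu
  have h1u : (0:ℝ) < 1 - u := by linarith
  have hd1 : HasDerivAt (fun u : ℝ => Real.log (1 - u)) (-(1 - u)⁻¹) u := by
    have := (Real.hasDerivAt_log (ne_of_gt h1u)).comp u ((hasDerivAt_id u).const_sub 1)
    simpa [Function.comp_def] using this
  have hd2 : HasDerivAt φ (-(1 - u)⁻¹ - u⁻¹) u :=
    hd1.sub (Real.hasDerivAt_log (ne_of_gt h0))
  exact hd2.hasDerivWithinAt

lemma phi_inj : InjOn φ (Ioo (0:ℝ) 1) := fun a ha b hb h => by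
  rw [← fermi_phi ha, ← fermi_phi hb, h]

lemma phi_img : φ '' Ioo (0:ℝ) 1 = univ := by
  apply eq_univ_of_forall
  intro x
  have hx : (0:ℝ) < 1 + Real.exp x := by positivity
  set u := (1 + Real.exp x)⁻¹ with hu_def
  have hu0 : 0 < u := by positivity
  have hu1 : u < 1 := by
    rw [hu_def, inv_lt_one_iff₀]
    right; linarith [Real.exp_pos x]
  refine ⟨u, ⟨hu0, hu1⟩, ?_⟩
  have h1u : 1 - u = Real.exp x * u := by
    rw [hu_def]
    field_simp
    ring
  rw [φ, h1u, Real.log_mul (Real.exp_ne_zero x) (ne_of_gt hu0), Real.log_exp]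
  ring

end FermiEntropyAux

open FermiEntropyAux

/-- The integral over `ℝ` of the binary entropy of the Fermi function,
`∫ (-f(x) ln f(x) - (1-f(x)) ln(1-f(x))) dx` with `f(x) = (1+eˣ)⁻¹`,
converges and equals `π²/3`. -/
theorem integral_entropy_fermi_eq_pi_sq_div_three :
    Integrable (fun x : ℝ =>
        -((1 + Real.exp x)⁻¹ * Real.log ((1 + Real.exp x)⁻¹))
          - (1 - (1 + Real.exp x)⁻¹) * Real.log (1 - (1 + Real.exp x)⁻¹)) ∧
    ∫ x : ℝ,
        (-((1 + Real.exp x)⁻¹ * Real.log ((1 + Real.exp x)⁻¹))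
          - (1 - (1 + Real.exp x)⁻¹) * Real.log (1 - (1 + Real.exp x)⁻¹))
      = Real.pi ^ 2 / 3 := by
  set g : ℝ → ℝ := fun x =>
    -((1 + Real.exp x)⁻¹ * Real.log ((1 + Real.exp x)⁻¹))
      - (1 - (1 + Real.exp x)⁻¹) * Real.log (1 - (1 + Real.exp x)⁻¹) with hg_def
  have key : EqOn (fun u => |(-(1 - u)⁻¹ - u⁻¹)| • g (φ u)) (fun u => A u + B u)
      (Ioo (0:ℝ) 1) := by
    intro u hu
    obtain ⟨h0, h1⟩ := hu
    have h1u : (0:ℝ) < 1 - u := by linarith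
    have hfermi := fermi_phi ⟨h0, h1⟩
    have habs : |(-(1 - u)⁻¹ - u⁻¹)| = (1 - u)⁻¹ + u⁻¹ := by
      rw [show (-(1 - u)⁻¹ - u⁻¹) = -((1 - u)⁻¹ + u⁻¹) by ring, abs_neg, abs_of_pos]
      positivity
    simp only [hg_def, hfermi, smul_eq_mul, habs, A, B]
    field_simp
    ring
  have him : Integrable g := by
    rw [← integrableOn_univ, ← phi_img,
      integrableOn_image_iff_integrableOn_abs_deriv_smul measurableSet_Ioo phi_deriv phi_inj g]
    have hAB : IntegrableOn (fun u => A u + B u) (Ioo (0:ℝ) 1) :=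
      integrableOn_A.add integrableOn_B
    exact hAB.congr_fun (fun u hu => (key hu).symm) measurableSet_Ioo
  refine ⟨him, ?_⟩
  have hint : ∫ x, g x = ∫ u in Ioo (0:ℝ) 1, (A u + B u) := by
    rw [← setIntegral_univ, ← phi_img,
      integral_image_eq_integral_abs_deriv_smul measurableSet_Ioo phi_deriv phi_inj g]
    exact setIntegral_congr_fun measurableSet_Ioo key
  rw [hint, integral_add integrableOn_A integrableOn_B, integral_A, integral_B]
  ring
end

section
/- For every α > 0 with α ≠ 1, the integral ∫_{−∞}^{∞} (1−α)⁻¹ · ln( f(x)^α + (1−f(x))^α ) dx, with f(x) = (1 + e^x)⁻¹, converges and equals (π²/6) · (1+α)/α. -/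
open MeasureTheory Set

namespace RenyiFermiAux

open Real

lemma eta2 : HasSum (fun n : ℕ => (-1 : ℝ)^n / ((n : ℝ)+1)^2) (π^2/12) := by
  have h0 : HasSum (fun n : ℕ => (1:ℝ) / (n : ℝ) ^ 2) (π ^ 2 / 6) := hasSum_zeta_two
  have h1 : HasSum (fun n : ℕ => (1:ℝ) / ((n : ℝ)+1) ^ 2) (π ^ 2 / 6) := by
    have h := (hasSum_nat_add_iff (f := fun n : ℕ => (1:ℝ) / (n : ℝ) ^ 2) 1).2
      (by simpa using h0)
    simpa using h
  have hfe : HasSum (fun k : ℕ => (1:ℝ) / ((2*k : ℕ) : ℝ) ^ 2) (π ^ 2 / 24) := by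
    have h := h0.mul_left (1/4)
    have he : (fun k : ℕ => (1:ℝ) / ((2*k : ℕ) : ℝ) ^ 2)
        = fun k : ℕ => (1/4) * ((1:ℝ) / (k : ℝ) ^ 2) := by
      funext k
      rcases Nat.eq_zero_or_pos k with hk | hk
      · simp [hk]
      · have : (k : ℝ) ≠ 0 := Nat.cast_ne_zero.2 hk.ne'
        push_cast
        field_simp
        ring
    rw [he]
    convert h using 1
    exacts [rfl, by ring]
  have hinj : Function.Injective (fun k : ℕ => 2*k+1) := by
    intro a b h
    simpa using h
  obtain ⟨t, hfo⟩ : ∃ t, HasSum (fun k : ℕ => (1:ℝ) / ((2*k+1 : ℕ) : ℝ) ^ 2) t :=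
    ⟨_, (h0.summable.comp_injective hinj).hasSum⟩
  have ht : t = π ^ 2 / 8 := by
    have h := h0.unique (HasSum.even_add_odd (f := fun n : ℕ => (1:ℝ) / (n : ℝ) ^ 2) hfe hfo)
    linarith
  have hE : HasSum (fun k : ℕ => (-1 : ℝ)^(2*k) / (((2*k : ℕ) : ℝ)+1)^2) (π ^ 2 / 8) := by
    rw [← ht]
    have he : (fun k : ℕ => (-1 : ℝ)^(2*k) / (((2*k : ℕ) : ℝ)+1)^2)
        = fun k : ℕ => (1:ℝ) / ((2*k+1 : ℕ) : ℝ) ^ 2 := by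
      funext k
      rw [pow_mul]
      push_cast
      norm_num
    rw [he]; exact hfo
  have hO : HasSum (fun k : ℕ => (-1 : ℝ)^(2*k+1) / (((2*k+1 : ℕ) : ℝ)+1)^2) (-(π ^ 2 / 24)) := by
    have h := h1.mul_left (-(1/4))
    have he : (fun k : ℕ => (-1 : ℝ)^(2*k+1) / (((2*k+1 : ℕ) : ℝ)+1)^2)
        = fun k : ℕ => (-(1/4)) * ((1:ℝ) / ((k : ℝ)+1) ^ 2) := by
      funext k
      rw [pow_succ, pow_mul]
      have hk : ((k : ℝ) + 1) ≠ 0 := by positivity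
      push_cast
      field_simp
      ring
    rw [he]
    convert h using 1
    exacts [rfl, by ring]
  have h := HasSum.even_add_odd (f := fun n : ℕ => (-1 : ℝ)^n / ((n : ℝ)+1)^2) hE hO
  convert h using 1
  ring

lemma int_exp_scaled {b : ℝ} (hb : 0 < b) :
    ∫ x in Ioi (0:ℝ), exp (-(b * x)) = b⁻¹ := by
  have h := integral_comp_mul_left_Ioi (fun y => exp (-y)) 0 hb
  simp only [mul_zero] at h
  rw [h, integral_exp_neg_Ioi_zero, smul_eq_mul, mul_one]

lemma integrableOn_log_one_add_exp {b : ℝ} (hb : 0 < b) :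
    IntegrableOn (fun x : ℝ => log (1 + exp (-(b * x)))) (Ioi 0) := by
  have hmono : IntegrableOn (fun x : ℝ => exp (-(b * x))) (Ioi 0) := by
    have h := exp_neg_integrableOn_Ioi 0 hb
    simp only [neg_mul] at h
    exact h
  refine hmono.mono' ?_ ?_
  · apply Measurable.aestronglyMeasurable
    exact (measurable_const.add ((measurable_id.const_mul b).neg.exp)).log
  · filter_upwards with x
    have h1 : (0:ℝ) < 1 + exp (-(b * x)) := by positivity
    rw [Real.norm_eq_abs, abs_of_nonneg (Real.log_nonneg (by linarith [Real.exp_pos (-(b*x))]))]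
    calc log (1 + exp (-(b * x))) ≤ (1 + exp (-(b*x))) - 1 :=
          Real.log_le_sub_one_of_pos h1
    _ = exp (-(b*x)) := by ring

lemma key_integral :
    ∫ x in Ioi (0:ℝ), log (1 + exp (-x)) = π^2/12 := by
  set μ := volume.restrict (Ioi (0:ℝ))
  set F : ℕ → ℝ → ℝ := fun n x => ((-1:ℝ)^n / ((n:ℝ)+1)) * exp (-(((n:ℝ)+1) * x)) with hF
  have hpos : ∀ n : ℕ, (0:ℝ) < (n:ℝ)+1 := fun n => by positivity
  have hFint : ∀ n, Integrable (F n) μ := by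
    intro n
    have h : IntegrableOn (fun x : ℝ => exp (-(((n:ℝ)+1) * x))) (Ioi 0) := by
      have h := exp_neg_integrableOn_Ioi 0 (hpos n)
      simp only [neg_mul] at h
      exact h
    exact (h.const_mul _)
  have hFval : ∀ n, ∫ x, F n x ∂μ = (-1:ℝ)^n / ((n:ℝ)+1)^2 := by
    intro n
    rw [MeasureTheory.integral_const_mul, int_exp_scaled (hpos n)]
    field_simp
  have hFnorm : ∀ n, ∫ x, ‖F n x‖ ∂μ = 1 / ((n:ℝ)+1)^2 := by
    intro n
    have h : ∀ x, ‖F n x‖ = (((n:ℝ)+1))⁻¹ * exp (-(((n:ℝ)+1) * x)) := by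
      intro x
      rw [norm_mul, Real.norm_of_nonneg (exp_nonneg _), Real.norm_eq_abs, abs_div,
        abs_pow, abs_neg, abs_one, one_pow, abs_of_pos (hpos n), one_div]
    simp_rw [h]
    rw [MeasureTheory.integral_const_mul, int_exp_scaled (hpos n)]
    field_simp
  have hsum : Summable fun n => ∫ x, ‖F n x‖ ∂μ := by
    simp_rw [hFnorm]
    have h : Summable (fun n : ℕ => (1:ℝ) / ((n:ℝ)+1)^2) := by
      have h2 := (Real.summable_one_div_nat_pow (p := 2)).2 (by norm_num)
      exact_mod_cast (summable_nat_add_iff 1).2 h2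
    exact h
  have hswap := MeasureTheory.hasSum_integral_of_summable_integral_norm hFint hsum
  simp_rw [hFval] at hswap
  have heq : ∫ x, (∑' n, F n x) ∂μ = ∫ x in Ioi (0:ℝ), log (1 + exp (-x)) := by
    refine setIntegral_congr_fun measurableSet_Ioi (fun x hx => ?_)
    have hlt : |(-exp (-x))| < 1 := by
      rw [abs_neg, abs_of_nonneg (exp_nonneg _)]
      exact exp_lt_one_iff.2 (by simpa using hx)
    have h := (hasSum_pow_div_log_of_abs_lt_one hlt).neg
    have hfun : (fun n : ℕ => -((-exp (-x)) ^ (n + 1) / ((n:ℝ) + 1))) = fun n => F n x := by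
      funext n
      rw [hF]
      have h2 : (-exp (-x)) ^ (n + 1) = (-1:ℝ)^(n+1) * exp (-(((n:ℝ)+1) * x)) := by
        rw [neg_pow, ← Real.exp_nat_mul]
        push_cast
        ring_nf
      rw [h2, pow_succ]
      push_cast
      ring
    rw [hfun] at h
    rw [h.tsum_eq]
    simp [sub_neg_eq_add]
  rw [← heq]
  exact hswap.unique eta2

lemma hlog (t : ℝ) : log (1 + exp t) = t + log (1 + exp (-t)) := by
  have h : (1:ℝ) + exp t = exp t * (1 + exp (-t)) := by
    rw [mul_add, mul_one, ← exp_add]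
    simp [add_comm]
  rw [h, log_mul (exp_ne_zero t) (by positivity), log_exp]

lemma pointwise (α : ℝ) (hα : 0 < α) (x : ℝ) :
    Real.log (((1 + Real.exp x)⁻¹) ^ α + (1 - (1 + Real.exp x)⁻¹) ^ α)
      = Real.log (1 + Real.exp (-(α * x))) - α * Real.log (1 + Real.exp (-x)) := by
  have hu : (0:ℝ) < exp x := exp_pos x
  have h1u : (0:ℝ) < 1 + exp x := by positivity
  have h2 : 1 - (1 + exp x)⁻¹ = exp x * (1 + exp x)⁻¹ := by
    field_simp
    ring
  have h5 : exp x ^ α = exp (α * x) := by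
    rw [Real.rpow_def_of_pos hu, log_exp, mul_comm]
  have hsum : ((1 + exp x)⁻¹) ^ α + (1 - (1 + exp x)⁻¹) ^ α
      = (1 + exp (α * x)) * ((1 + exp x) ^ α)⁻¹ := by
    rw [h2, Real.mul_rpow hu.le (inv_nonneg.2 h1u.le), Real.inv_rpow h1u.le, h5]
    ring
  rw [hsum, log_mul (by positivity) (by positivity), log_inv, Real.log_rpow h1u,
    hlog (α * x), hlog x]
  ring

lemma pointwise_abs (α : ℝ) (hα : 0 < α) (x : ℝ) :
    Real.log (((1 + Real.exp x)⁻¹) ^ α + (1 - (1 + Real.exp x)⁻¹) ^ α)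
      = Real.log (1 + Real.exp (-(α * |x|))) - α * Real.log (1 + Real.exp (-|x|)) := by
  rw [pointwise α hα x]
  rcases le_or_gt 0 x with h | h
  · rw [abs_of_nonneg h]
  · rw [abs_of_neg h]
    have h1 : Real.log (1 + exp (-(α * x))) = -(α*x) + Real.log (1 + exp (-(α * -x))) := by
      have h' := hlog (-(α * x))
      simpa using h'
    have h2 : Real.log (1 + exp (-x)) = -x + Real.log (1 + exp (- -x)) := by
      have h' := hlog (-x)
      simpa using h'
    rw [h1, h2]
    ring_nf

lemma G_integrable {b : ℝ} (hb : 0 < b) :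
    Integrable (fun x : ℝ => log (1 + exp (-(b * |x|)))) := by
  have hf : IntegrableOn (fun x : ℝ => log (1 + exp (-(b * x)))) (Ioi 0) :=
    integrableOn_log_one_add_exp hb
  have h1 : IntegrableOn (fun x : ℝ => log (1 + exp (-(b * |x|)))) (Ioi 0) := by
    refine hf.congr_fun (fun x hx => ?_) measurableSet_Ioi
    rw [abs_of_pos (by exact hx)]
  have h2 : IntegrableOn (fun x : ℝ => log (1 + exp (-(b * |x|)))) (Iic 0) := by
    rw [← Measure.map_neg_eq_self (volume : Measure ℝ)]
    have m : MeasurableEmbedding fun x : ℝ => -x := (Homeomorph.neg ℝ).measurableEmbedding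
    rw [m.integrableOn_map_iff]
    simp_rw [Function.comp_def, abs_neg, neg_preimage, neg_Iic, neg_zero]
    exact Iff.mpr integrableOn_Ici_iff_integrableOn_Ioi h1
  have h := h2.union h1
  rwa [Iic_union_Ioi, integrableOn_univ] at h

lemma G_value {b : ℝ} (hb : 0 < b) :
    ∫ x : ℝ, log (1 + exp (-(b * |x|))) = π^2/6 * b⁻¹ := by
  rw [integral_comp_abs (f := fun x => log (1 + exp (-(b * x))))]
  have h := integral_comp_mul_left_Ioi (fun y => log (1 + exp (-y))) 0 hb
  simp only [mul_zero] at h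
  rw [h, key_integral, smul_eq_mul]
  ring

end RenyiFermiAux

/-- For every `α > 0` with `α ≠ 1`, the integral over `ℝ` of the Rényi entropy of the
Fermi function, `∫ (1-α)⁻¹ ln (f(x)^α + (1-f(x))^α) dx` with `f(x) = (1+eˣ)⁻¹`,
converges and equals `(π²/6)·(1+α)/α`. -/
theorem integral_renyi_entropy_fermi (α : ℝ) (hα : 0 < α) (hα1 : α ≠ 1) :
    Integrable (fun x : ℝ =>
        (1 - α)⁻¹ * Real.log (((1 + Real.exp x)⁻¹) ^ α + (1 - (1 + Real.exp x)⁻¹) ^ α)) ∧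
    ∫ x : ℝ,
        (1 - α)⁻¹ * Real.log (((1 + Real.exp x)⁻¹) ^ α + (1 - (1 + Real.exp x)⁻¹) ^ α)
      = (Real.pi ^ 2 / 6) * ((1 + α) / α) := by
  open RenyiFermiAux Real in
  have hfun : (fun x : ℝ =>
      (1 - α)⁻¹ * Real.log (((1 + Real.exp x)⁻¹) ^ α + (1 - (1 + Real.exp x)⁻¹) ^ α))
      = fun x : ℝ => (1 - α)⁻¹ *
        (Real.log (1 + Real.exp (-(α * |x|))) - α * Real.log (1 + Real.exp (-|x|))) := by
    funext x
    rw [RenyiFermiAux.pointwise_abs α hα x]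
  have hA : Integrable (fun x : ℝ => Real.log (1 + Real.exp (-(α * |x|)))) :=
    RenyiFermiAux.G_integrable hα
  have hB : Integrable (fun x : ℝ => Real.log (1 + Real.exp (-(1 * |x|)))) :=
    RenyiFermiAux.G_integrable one_pos
  have hB' : Integrable (fun x : ℝ => Real.log (1 + Real.exp (-|x|))) := by
    simpa using hB
  constructor
  · rw [hfun]
    exact ((hA.sub (hB'.const_mul α)).const_mul _)
  · rw [hfun]
    rw [MeasureTheory.integral_const_mul,
      MeasureTheory.integral_sub hA (hB'.const_mul α),
      MeasureTheory.integral_const_mul]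
    have hBval : ∫ x : ℝ, Real.log (1 + Real.exp (-|x|)) = Real.pi^2/6 * 1⁻¹ := by
      have h := RenyiFermiAux.G_value one_pos
      simpa using h
    rw [RenyiFermiAux.G_value hα, hBval]
    have h1 : (1:ℝ) - α ≠ 0 := by
      intro h
      apply hα1
      linarith
    field_simp
    ring
end

section
/- (Sommerfeld expansion.) Let μ ∈ ℝ, E₀ < μ, and let g : ℝ → ℝ be continuously differentiable with g(E) = 0 for all E ≤ E₀, and assume there are constants C > 0 and k ∈ ℕ with |g(E)| + |g′(E)| ≤ C(1+|E|)^k for all E. Then, as T → 0⁺, T^{−2} · [ ∫_{−∞}^{∞} g(E) · f_T(E−μ) dE − ∫_{−∞}^{μ} g(E) dE ] converges to (π²/6) · g′(μ). -/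
open Filter MeasureTheory Set

namespace SommerfeldAux

/-- The difference between the Fermi function and the step function. -/
noncomputable def H : ℝ → ℝ := fun x => (1 + Real.exp x)⁻¹ - Set.indicator (Set.Iic 0) 1 x

lemma measurable_H : Measurable H :=
  ((measurable_const.add Real.measurable_exp).inv).sub
    (measurable_const.indicator measurableSet_Iic)

lemma H_of_pos {x : ℝ} (hx : 0 < x) : H x = (1 + Real.exp x)⁻¹ := by
  simp [H, indicator_of_notMem, not_le.mpr hx]

lemma H_of_nonpos {x : ℝ} (hx : x ≤ 0) : H x = (1 + Real.exp x)⁻¹ - 1 := by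
  simp [H, indicator_of_mem, hx]

lemma abs_H_le (x : ℝ) : |H x| ≤ Real.exp (-|x|) := by
  have h1 : (0:ℝ) < 1 + Real.exp x := by positivity
  rcases le_or_gt x 0 with hx | hx
  · rw [H_of_nonpos hx, abs_of_nonpos (by
      rw [sub_nonpos]
      rw [inv_le_one_iff₀]
      right; linarith [Real.exp_pos x]), abs_of_nonpos hx]
    have key : 1 - (1 + Real.exp x)⁻¹ = Real.exp x / (1 + Real.exp x) := by
      field_simp
      ring
    rw [neg_sub, key, neg_neg]
    calc Real.exp x / (1 + Real.exp x) ≤ Real.exp x / 1 := by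
          apply div_le_div_of_nonneg_left (Real.exp_pos x).le one_pos
          linarith [Real.exp_pos x]
      _ = Real.exp x := by ring
  · rw [H_of_pos hx, abs_of_nonneg (by positivity), abs_of_pos hx, Real.exp_neg]
    exact inv_anti₀ (Real.exp_pos x) (by linarith)

lemma H_neg {x : ℝ} (hx : 0 < x) : H (-x) = - H x := by
  rw [H_of_nonpos (by linarith), H_of_pos hx, Real.exp_neg]
  have h1 : (0:ℝ) < 1 + Real.exp x := by positivity
  have h2 : Real.exp x ≠ 0 := (Real.exp_pos x).ne'
  field_simp
  ring

/-- Master integrability lemma : polynomial × exponential decay. -/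
lemma integrable_polyexp (n : ℕ) :
    Integrable (fun x : ℝ => (1 + |x|) ^ n * Real.exp (-|x|)) := by
  have hcont : Continuous (fun x : ℝ => (1 + |x|) ^ n * Real.exp (-|x|)) := by
    exact ((continuous_const.add continuous_abs).pow n).mul
      ((continuous_abs.neg).rexp)
  have hIoi : IntegrableOn (fun x : ℝ => (1 + |x|) ^ n * Real.exp (-|x|)) (Ioi 0) := by
    apply integrable_of_isBigO_exp_neg (b := (1:ℝ)/2) one_half_pos hcont.continuousOn
    refine (Asymptotics.isLittleO_of_tendsto (fun x h => absurd h (Real.exp_ne_zero _)) ?_).isBigO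
    have base := tendsto_rpow_mul_exp_neg_mul_atTop_nhds_zero (n : ℝ) ((1:ℝ)/2) one_half_pos
    have comp := base.comp (tendsto_atTop_add_const_left atTop 1 tendsto_id)
    have final := comp.mul_const (Real.exp ((1:ℝ)/2))
    rw [zero_mul] at final
    apply final.congr'
    filter_upwards [eventually_ge_atTop (0:ℝ)] with x hx
    have h1 : (0:ℝ) < 1 + x := by linarith
    have hax : |x| = x := abs_of_nonneg hx
    simp only [Function.comp_apply, id_eq]
    rw [Real.rpow_natCast, hax, mul_assoc, ← Real.exp_add, mul_div_assoc, ← Real.exp_sub]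
    congr 2
    ring
  have hIci : IntegrableOn (fun x : ℝ => (1 + |x|) ^ n * Real.exp (-|x|)) (Ici 0) :=
    Iff.mpr integrableOn_Ici_iff_integrableOn_Ioi hIoi
  have hIic : IntegrableOn (fun x : ℝ => (1 + |x|) ^ n * Real.exp (-|x|)) (Iic 0) := by
    rw [← Measure.map_neg_eq_self (volume : Measure ℝ)]
    have m : MeasurableEmbedding fun x : ℝ => -x :=
      (Homeomorph.neg ℝ).measurableEmbedding
    rw [m.integrableOn_map_iff]
    simp_rw [Function.comp_def, abs_neg, neg_preimage, neg_Iic, neg_zero]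
    exact hIci
  have := hIic.union hIoi
  rwa [Iic_union_Ioi, integrableOn_univ] at this

lemma integrable_polyexp_shift (n : ℕ) (a : ℝ) :
    Integrable (fun x : ℝ => (1 + |x|) ^ n * Real.exp (-|x - a|)) := by
  have hmaster : Integrable (fun x : ℝ => (1 + |a|) ^ n *
      ((1 + |x - a|) ^ n * Real.exp (-|x - a|))) :=
    (((integrable_polyexp n).comp_sub_right a)).const_mul _
  have hcont : Continuous (fun x : ℝ => (1 + |x|) ^ n * Real.exp (-|x - a|)) := by
    apply ((continuous_const.add continuous_abs).pow n).mul
    exact (((continuous_id.sub continuous_const).abs).neg).rexp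
  refine hmaster.mono' hcont.aestronglyMeasurable (ae_of_all _ fun x => ?_)
  rw [Real.norm_eq_abs, abs_of_nonneg (by positivity)]
  have h1 : 1 + |x| ≤ (1 + |a|) * (1 + |x - a|) := by
    have := abs_sub_abs_le_abs_sub x a
    have h0 := abs_nonneg (x - a)
    have h0' := abs_nonneg a
    nlinarith
  calc (1 + |x|) ^ n * Real.exp (-|x - a|)
      ≤ ((1 + |a|) * (1 + |x - a|)) ^ n * Real.exp (-|x - a|) := by
        apply mul_le_mul_of_nonneg_right _ (Real.exp_pos _).le
        exact pow_le_pow_left₀ (by positivity) h1 n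
    _ = (1 + |a|) ^ n * ((1 + |x - a|) ^ n * Real.exp (-|x - a|)) := by
        rw [mul_pow]; ring

lemma integrable_H : Integrable H := by
  have hm := integrable_polyexp 0
  simp only [pow_zero, one_mul] at hm
  refine hm.mono' measurable_H.aestronglyMeasurable (ae_of_all _ fun x => ?_)
  simpa [Real.norm_eq_abs] using abs_H_le x

lemma integral_H_eq_zero : ∫ x : ℝ, H x = 0 := by
  have hi := integrable_H
  have e1 := integral_comp_neg_Iic (0:ℝ) (fun y => H (-y))
  simp only [neg_neg, neg_zero] at e1
  -- e1 : ∫ x in Iic 0, H x = ∫ x in Ioi 0, H (-x)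
  have e2 : ∫ x in Ioi (0:ℝ), H (-x) = - ∫ x in Ioi (0:ℝ), H x := by
    rw [← integral_neg]
    exact setIntegral_congr_fun measurableSet_Ioi (fun x hx => H_neg hx)
  have e3 := intervalIntegral.integral_Iic_add_Ioi (b := (0:ℝ)) hi.integrableOn hi.integrableOn
  rw [← e3, e1, e2]
  ring

lemma integrableOn_mul_exp {c : ℝ} (hc : 1 ≤ c) :
    IntegrableOn (fun x : ℝ => x * Real.exp (-(c * x))) (Ioi 0) := by
  have hm := (integrable_polyexp 1).restrict (s := Ioi 0)
  refine hm.mono' ?_ ?_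
  · exact (continuous_id.mul ((continuous_const.mul continuous_id).neg.rexp)).aestronglyMeasurable
  · rw [ae_restrict_iff' measurableSet_Ioi]
    refine ae_of_all _ fun x hx => ?_
    have hx0 : (0:ℝ) < x := hx
    rw [Real.norm_eq_abs, abs_of_nonneg (by positivity)]
    have h1 : Real.exp (-(c * x)) ≤ Real.exp (-|x|) := by
      apply Real.exp_le_exp.mpr
      rw [abs_of_pos hx0]
      nlinarith
    have h2 : x ≤ 1 + |x| := by rw [abs_of_pos hx0]; linarith
    calc x * Real.exp (-(c * x)) ≤ (1 + |x|) * Real.exp (-|x|) :=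
          mul_le_mul h2 h1 (Real.exp_pos _).le (by positivity)
      _ = (1 + |x|) ^ 1 * Real.exp (-|x|) := by rw [pow_one]

lemma integral_mul_exp_Ioi {c : ℝ} (hc : 0 < c) :
    ∫ x in Ioi (0:ℝ), x * Real.exp (-(c * x)) = 1 / c ^ 2 := by
  have := Real.integral_rpow_mul_exp_neg_mul_Ioi (a := 2) two_pos hc
  rw [show ((2:ℝ) - 1) = (1:ℝ) by norm_num] at this
  simp only [Real.rpow_one] at this
  rw [show ((1:ℝ)/c) ^ (2:ℝ) = (1/c) ^ (2:ℕ) by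
    rw [← Real.rpow_natCast (1/c) 2]; norm_num, Real.Gamma_two, mul_one] at this
  rw [this]
  rw [div_pow, one_pow]

lemma hasSum_eta2 :
    HasSum (fun m : ℕ => 1 / ((2 * (m:ℝ) + 1)) ^ 2 - 1 / ((2 * (m:ℝ) + 2)) ^ 2)
      (Real.pi ^ 2 / 12) := by
  set f0 : ℕ → ℝ := fun n => 1 / ((n:ℝ) + 1) ^ 2 with hf0
  have h0 : HasSum f0 (Real.pi ^ 2 / 6) := by
    have h := (hasSum_nat_add_iff' (f := fun n : ℕ => 1 / (n:ℝ) ^ 2) 1).mpr hasSum_zeta_two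
    simp only [Finset.range_one, Finset.sum_singleton, Nat.cast_zero] at h
    norm_num at h
    refine h.congr_fun fun n => ?_
    simp [hf0]
  have hodd : HasSum (fun m : ℕ => f0 (2 * m + 1)) (Real.pi ^ 2 / 24) := by
    have h := h0.mul_left (1/4)
    have : (1/4) * (Real.pi ^ 2 / 6) = Real.pi ^ 2 / 24 := by ring
    rw [this] at h
    refine h.congr_fun fun m => ?_
    simp only [hf0]
    push_cast
    field_simp
    ring
  have hevenS : Summable (fun m : ℕ => f0 (2 * m)) := by
    apply h0.summable.comp_injective (f := f0) (i := fun m : ℕ => 2 * m)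
    intro a b hab
    simp only at hab
    omega
  have heven : HasSum (fun m : ℕ => f0 (2 * m)) (∑' m : ℕ, f0 (2 * m)) := hevenS.hasSum
  have htot := heven.even_add_odd hodd
  have hE : ∑' m : ℕ, f0 (2 * m) = Real.pi ^ 2 / 8 := by
    have := htot.unique h0
    linarith
  rw [hE] at heven
  have := heven.sub hodd
  have hval : Real.pi ^ 2 / 8 - Real.pi ^ 2 / 24 = Real.pi ^ 2 / 12 := by ring
  rw [hval] at this
  refine this.congr_fun fun m => ?_
  simp only [hf0]
  push_cast
  ring_nf

lemma integral_Ioi_xfermi :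
    ∫ x in Ioi (0:ℝ), x * (1 + Real.exp x)⁻¹ = Real.pi ^ 2 / 12 := by
  set F : ℕ → ℝ → ℝ := fun m x =>
    x * Real.exp (-((2 * (m:ℝ) + 1) * x)) - x * Real.exp (-((2 * (m:ℝ) + 2) * x)) with hF
  have hc1 : ∀ m : ℕ, (1:ℝ) ≤ 2 * (m:ℝ) + 1 := fun m => by
    have := Nat.cast_nonneg (α := ℝ) m; linarith
  have hc2 : ∀ m : ℕ, (1:ℝ) ≤ 2 * (m:ℝ) + 2 := fun m => by
    have := Nat.cast_nonneg (α := ℝ) m; linarith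
  have hc1' : ∀ m : ℕ, (0:ℝ) < 2 * (m:ℝ) + 1 := fun m => by positivity
  have hc2' : ∀ m : ℕ, (0:ℝ) < 2 * (m:ℝ) + 2 := fun m => by positivity
  have hFm_int : ∀ m : ℕ, IntegrableOn (F m) (Ioi 0) := fun m =>
    (integrableOn_mul_exp (hc1 m)).sub (integrableOn_mul_exp (hc2 m))
  have hFnonneg : ∀ m : ℕ, ∀ x ∈ Ioi (0:ℝ), 0 ≤ F m x := by
    intro m x hx
    have hx0 : (0:ℝ) < x := hx
    have : Real.exp (-((2 * (m:ℝ) + 2) * x)) ≤ Real.exp (-((2 * (m:ℝ) + 1) * x)) := by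
      apply Real.exp_le_exp.mpr
      nlinarith
    simp only [hF]
    nlinarith
  have hFval : ∀ m : ℕ, ∫ x in Ioi (0:ℝ), F m x
      = 1 / (2 * (m:ℝ) + 1) ^ 2 - 1 / (2 * (m:ℝ) + 2) ^ 2 := by
    intro m
    rw [integral_sub (integrableOn_mul_exp (hc1 m)) (integrableOn_mul_exp (hc2 m)),
      integral_mul_exp_Ioi (hc1' m), integral_mul_exp_Ioi (hc2' m)]
  have hmeas : ∀ m : ℕ, AEStronglyMeasurable (F m) (volume.restrict (Ioi 0)) := by
    intro m
    apply Continuous.aestronglyMeasurable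
    exact (continuous_id.mul ((continuous_const.mul continuous_id).neg.rexp)).sub
      (continuous_id.mul ((continuous_const.mul continuous_id).neg.rexp))
  have hlint : ∑' m : ℕ, ∫⁻ x, ‖F m x‖₊ ∂(volume.restrict (Ioi 0)) ≠ ⊤ := by
    have heq : ∀ m : ℕ, ∫⁻ x, ‖F m x‖₊ ∂(volume.restrict (Ioi 0))
        = ENNReal.ofReal (1 / (2 * (m:ℝ) + 1) ^ 2 - 1 / (2 * (m:ℝ) + 2) ^ 2) := by
      intro m
      rw [← hFval m]
      rw [ofReal_integral_eq_lintegral_ofReal (hFm_int m)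
        ((ae_restrict_iff' measurableSet_Ioi).mpr (ae_of_all _ (hFnonneg m)))]
      apply lintegral_congr_ae
      filter_upwards [ae_restrict_mem measurableSet_Ioi] with x hx
      rw [← enorm_eq_nnnorm, Real.enorm_eq_ofReal (hFnonneg m x hx)]
    simp_rw [heq]
    have hnn : ∀ m : ℕ, 0 ≤ 1 / (2 * (m:ℝ) + 1) ^ 2 - 1 / (2 * (m:ℝ) + 2) ^ 2 := by
      intro m
      have h1 : (2 * (m:ℝ) + 1) ^ 2 ≤ (2 * (m:ℝ) + 2) ^ 2 := by nlinarith [hc1' m]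
      have := one_div_le_one_div_of_le (by positivity) h1
      linarith
    rw [← ENNReal.ofReal_tsum_of_nonneg hnn hasSum_eta2.summable]
    exact ENNReal.ofReal_ne_top
  have key := integral_tsum hmeas hlint
  have htsum : ∀ x ∈ Ioi (0:ℝ), ∑' m : ℕ, F m x = x * (1 + Real.exp x)⁻¹ := by
    intro x hx
    have hx0 : (0:ℝ) < x := hx
    have hr0 : (0:ℝ) ≤ Real.exp (-(2 * x)) := (Real.exp_pos _).le
    have hr1 : Real.exp (-(2 * x)) < 1 := by
      rw [Real.exp_lt_one_iff]; linarith
    have hterm : ∀ m : ℕ, F m x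
        = (x * Real.exp (-x) - x * Real.exp (-(2 * x))) * Real.exp (-(2 * x)) ^ m := by
      intro m
      have e1 : Real.exp (-((2 * (m:ℝ) + 1) * x)) = Real.exp (-x) * Real.exp (-(2*x)) ^ m := by
        rw [← Real.exp_nat_mul, ← Real.exp_add]
        congr 1
        push_cast
        ring
      have e2 : Real.exp (-((2 * (m:ℝ) + 2) * x))
          = Real.exp (-(2 * x)) * Real.exp (-(2*x)) ^ m := by
        rw [← Real.exp_nat_mul, ← Real.exp_add]
        congr 1
        push_cast
        ring
      simp only [hF, e1, e2]
      ring
    rw [tsum_congr hterm, tsum_mul_left, tsum_geometric_of_lt_one hr0 hr1]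
    have hu : Real.exp (-x) = (Real.exp x)⁻¹ := Real.exp_neg x
    have h2x : Real.exp (-(2 * x)) = (Real.exp x)⁻¹ * (Real.exp x)⁻¹ := by
      rw [← Real.exp_neg, ← Real.exp_add]
      congr 1
      ring
    have hex : Real.exp x ≠ 0 := (Real.exp_pos x).ne'
    have hex1 : (0:ℝ) < 1 + Real.exp x := by positivity
    have hden : (1:ℝ) - Real.exp (-(2 * x)) ≠ 0 := by
      rw [sub_ne_zero]
      exact fun h => absurd h.symm (ne_of_lt hr1)
    have hden' := hden
    rw [h2x] at hden'
    rw [hu, h2x, inv_eq_one_div ((1:ℝ) - (Real.exp x)⁻¹ * (Real.exp x)⁻¹),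
      inv_eq_one_div ((1:ℝ) + Real.exp x), mul_one_div, mul_one_div,
      div_eq_div_iff hden' hex1.ne']
    field_simp
    ring
  have hL : ∫ x in Ioi (0:ℝ), ∑' m : ℕ, F m x = ∫ x in Ioi (0:ℝ), x * (1 + Real.exp x)⁻¹ :=
    setIntegral_congr_fun measurableSet_Ioi htsum
  rw [← hL, key]
  simp_rw [hFval]
  exact hasSum_eta2.tsum_eq

lemma integral_xH : ∫ x : ℝ, x * H x = Real.pi ^ 2 / 6 := by
  have hint : Integrable (fun x : ℝ => x * H x) := by
    refine (integrable_polyexp 1).mono'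
      (measurable_id.mul measurable_H).aestronglyMeasurable (ae_of_all _ fun x => ?_)
    rw [Real.norm_eq_abs, abs_mul, pow_one]
    have h1 : |x| ≤ 1 + |x| := by linarith [abs_nonneg x]
    exact mul_le_mul h1 (abs_H_le x) (abs_nonneg _) (by positivity)
  have e1 := integral_comp_neg_Iic (0:ℝ) (fun y => -y * H (-y))
  simp only [neg_neg, neg_zero] at e1
  have e2 : ∫ x in Ioi (0:ℝ), -x * H (-x) = ∫ x in Ioi (0:ℝ), x * H x := by
    refine setIntegral_congr_fun measurableSet_Ioi fun x hx => ?_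
    rw [H_neg hx]
    ring
  have e3 := intervalIntegral.integral_Iic_add_Ioi (b := (0:ℝ))
    hint.integrableOn hint.integrableOn
  have e4 : ∫ x in Ioi (0:ℝ), x * H x = Real.pi ^ 2 / 12 := by
    rw [← integral_Ioi_xfermi]
    refine setIntegral_congr_fun measurableSet_Ioi fun x hx => ?_
    rw [H_of_pos hx]
  rw [← e3, e1, e2, e4]
  ring

end SommerfeldAux

open SommerfeldAux in
/-- Sommerfeld expansion: for `μ ∈ ℝ`, `E₀ < μ` and a `C¹` function `g` vanishing on
`(-∞, E₀]` and of polynomial growth (together with its derivative), one has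
`T⁻² · (∫ g(E) f_T(E-μ) dE − ∫_{-∞}^μ g(E) dE) → (π²/6) g′(μ)` as `T → 0⁺`,
where `f_T(E) = (1+exp(E/T))⁻¹` is the Fermi function. -/
theorem sommerfeld_expansion (μ E₀ : ℝ) (hE₀ : E₀ < μ) (g : ℝ → ℝ)
    (hg : ContDiff ℝ 1 g) (hg0 : ∀ E ≤ E₀, g E = 0)
    (C : ℝ) (k : ℕ) (hC : 0 < C)
    (hbd : ∀ E : ℝ, |g E| + |deriv g E| ≤ C * (1 + |E|) ^ k) :
    Tendsto (fun T : ℝ =>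
        ((∫ E : ℝ, g E * (1 + Real.exp ((E - μ) / T))⁻¹) - ∫ E in Set.Iic μ, g E) / T ^ 2)
      (nhdsWithin 0 (Set.Ioi 0))
      (nhds (Real.pi ^ 2 / 6 * deriv g μ)) := by
  classical
  have hgc : Continuous g := hg.continuous
  have hgd : Differentiable ℝ g := hg.differentiable one_ne_zero
  have hgabs : ∀ E : ℝ, |g E| ≤ C * (1 + |E|) ^ k := fun E =>
    le_trans (le_add_of_nonneg_right (abs_nonneg _)) (hbd E)
  have hdabs : ∀ E : ℝ, |deriv g E| ≤ C * (1 + |E|) ^ k := fun E =>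
    le_trans (le_add_of_nonneg_left (abs_nonneg _)) (hbd E)
  set F : ℝ → ℝ → ℝ := fun T x => ((g (μ + T * x) - g μ) / T) * H x with hFdef
  have hKmeas : ∀ T : ℝ, AEStronglyMeasurable (fun x : ℝ => g (μ + T * x) * H x) volume := by
    intro T
    apply Measurable.aestronglyMeasurable
    exact ((hgc.measurable).comp (measurable_const.add (measurable_const.mul measurable_id))).mul
      measurable_H
  have hKint : ∀ T : ℝ, 0 < T → T ≤ 1 →
      Integrable (fun x : ℝ => g (μ + T * x) * H x) := by
    intro T hT0 hT1
    refine (((integrable_polyexp k).const_mul (C * (1 + |μ|) ^ k)).mono' (hKmeas T)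
      (ae_of_all _ fun x => ?_))
    rw [Real.norm_eq_abs, abs_mul]
    have h1 : |g (μ + T * x)| ≤ C * ((1 + |μ|) * (1 + |x|)) ^ k := by
      refine le_trans (hgabs _) ?_
      refine mul_le_mul_of_nonneg_left ?_ hC.le
      refine pow_le_pow_left₀ (by positivity) ?_ k
      have h2 : |T * x| ≤ |x| := by
        rw [abs_mul, abs_of_pos hT0]
        nlinarith [abs_nonneg x]
      have h3 : |μ + T * x| ≤ |μ| + |x| := le_trans (abs_add_le _ _) (by linarith)
      nlinarith [abs_nonneg μ, abs_nonneg x]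
    calc |g (μ + T * x)| * |H x|
        ≤ (C * ((1 + |μ|) * (1 + |x|)) ^ k) * Real.exp (-|x|) :=
          mul_le_mul h1 (abs_H_le x) (abs_nonneg _) (by positivity)
      _ = (C * (1 + |μ|) ^ k) * ((1 + |x|) ^ k * Real.exp (-|x|)) := by
          rw [mul_pow]; ring
  have key : ∀ T ∈ Set.Ioc (0:ℝ) 1,
      ((∫ E : ℝ, g E * (1 + Real.exp ((E - μ) / T))⁻¹) - ∫ E in Set.Iic μ, g E) / T ^ 2
        = ∫ x : ℝ, F T x := by
    rintro T ⟨hT0, hT1⟩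
    have hT0' : T ≠ 0 := ne_of_gt hT0
    set G : ℝ → ℝ := fun E => g E * H ((E - μ) / T) with hGdef
    have hGbound : ∀ E : ℝ, |G E| ≤ C * ((1 + |E|) ^ k * Real.exp (-|E - μ|)) := by
      intro E
      simp only [hGdef]
      rw [abs_mul]
      have h1 : |H ((E - μ) / T)| ≤ Real.exp (-|E - μ|) := by
        refine le_trans (abs_H_le _) (Real.exp_le_exp.mpr ?_)
        rw [neg_le_neg_iff, abs_div, abs_of_pos hT0, le_div_iff₀ hT0]
        nlinarith [abs_nonneg (E - μ)]
      calc |g E| * |H ((E - μ) / T)|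
          ≤ (C * (1 + |E|) ^ k) * Real.exp (-|E - μ|) :=
            mul_le_mul (hgabs E) h1 (abs_nonneg _) (by positivity)
        _ = C * ((1 + |E|) ^ k * Real.exp (-|E - μ|)) := by ring
    have hGmeas : AEStronglyMeasurable G volume := by
      apply Measurable.aestronglyMeasurable
      exact (hgc.measurable).mul
        (measurable_H.comp ((measurable_id.sub measurable_const).div_const T))
    have hGint : Integrable G := by
      refine ((integrable_polyexp_shift k μ).const_mul C).mono' hGmeas
        (ae_of_all _ fun E => ?_)
      rw [Real.norm_eq_abs]
      exact le_trans (hGbound E) (le_of_eq (by ring))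
    have hsplit : ∀ E : ℝ, g E * (1 + Real.exp ((E - μ) / T))⁻¹
        = Set.indicator (Set.Iic μ) g E + G E := by
      intro E
      by_cases hE : E ≤ μ
      · rw [Set.indicator_of_mem (Set.mem_Iic.mpr hE) g]
        simp only [hGdef]
        rw [H_of_nonpos (div_nonpos_of_nonpos_of_nonneg (sub_nonpos.mpr hE) hT0.le)]
        ring
      · push_neg at hE
        rw [Set.indicator_of_notMem (by simpa using hE.not_ge) g]
        simp only [hGdef]
        rw [H_of_pos (div_pos (sub_pos.mpr hE) hT0)]
        ring
    have hIic_int : IntegrableOn g (Set.Iic μ) := by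
      have h1 : IntegrableOn g (Set.Icc E₀ μ) := hgc.continuousOn.integrableOn_Icc
      have h2 : IntegrableOn g (Set.Iic E₀) := by
        have heq : Set.EqOn g (fun _ => (0:ℝ)) (Set.Iic E₀) := fun x hx => hg0 x hx
        rw [integrableOn_congr_fun heq measurableSet_Iic]
        exact integrableOn_zero
      refine (h2.union h1).mono_set fun x hx => ?_
      rcases le_or_gt x E₀ with h | h
      · exact Or.inl h
      · exact Or.inr ⟨h.le, hx⟩
    have hInd : Integrable (Set.indicator (Set.Iic μ) g) :=
      hIic_int.integrable_indicator measurableSet_Iic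
    have hLHS : (∫ E : ℝ, g E * (1 + Real.exp ((E - μ) / T))⁻¹)
        = (∫ E in Set.Iic μ, g E) + ∫ E : ℝ, G E := by
      simp_rw [hsplit]
      rw [integral_add hInd hGint, integral_indicator measurableSet_Iic]
    have hsub : ∫ E : ℝ, G E = T * ∫ x : ℝ, g (μ + T * x) * H x := by
      have e1 : (fun x : ℝ => G (μ + T * x)) = fun x => g (μ + T * x) * H x := by
        funext x
        simp only [hGdef]
        congr 2
        rw [add_sub_cancel_left]
        exact mul_div_cancel_left₀ x hT0'
      have e2 : ∫ x : ℝ, G (μ + T * x) = |T⁻¹| • ∫ y : ℝ, G (μ + y) :=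
        MeasureTheory.Measure.integral_comp_mul_left (fun y => G (μ + y)) T
      have e3 : ∫ y : ℝ, G (μ + y) = ∫ E : ℝ, G E := integral_add_left_eq_self G μ
      rw [← e1, e2, e3, abs_of_pos (inv_pos.mpr hT0), smul_eq_mul]
      field_simp
    have hHint := integrable_H
    have hFT : ∫ x : ℝ, F T x
        = ((∫ x : ℝ, g (μ + T * x) * H x) - g μ * ∫ x : ℝ, H x) / T := by
      have e4 : ∀ x : ℝ, F T x = (g (μ + T * x) * H x - g μ * H x) / T := by
        intro x
        simp only [hFdef]
        ring
      simp_rw [e4]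
      rw [integral_div, integral_sub (hKint T hT0 hT1) (hHint.const_mul (g μ)),
        integral_const_mul]
    rw [hLHS, hsub, hFT, integral_H_eq_zero, mul_zero, sub_zero]
    field_simp
    ring
  have bound_int : Integrable (fun x : ℝ =>
      (C * (1 + |μ|) ^ k) * ((1 + |x|) ^ (k+1) * Real.exp (-|x|))) :=
    (integrable_polyexp (k+1)).const_mul _
  have lim : Tendsto (fun T : ℝ => ∫ x : ℝ, F T x) (nhdsWithin 0 (Set.Ioi 0))
      (nhds (∫ x : ℝ, deriv g μ * (x * H x))) := by
    apply tendsto_integral_filter_of_dominated_convergence _ ?_ ?_ bound_int ?_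
    · refine Eventually.of_forall fun T => ?_
      apply Measurable.aestronglyMeasurable
      exact ((((hgc.measurable).comp
        (measurable_const.add (measurable_const.mul measurable_id))).sub
          measurable_const).div_const T).mul measurable_H
    · filter_upwards [Ioc_mem_nhdsGT zero_lt_one] with T hT
      obtain ⟨hT0, hT1⟩ := hT
      refine ae_of_all _ fun x => ?_
      simp only [hFdef]
      rw [Real.norm_eq_abs, abs_mul, abs_div, abs_of_pos hT0]
      have hs : Convex ℝ (Set.Icc (μ - |x|) (μ + |x|)) := convex_Icc _ _
      have hmem1 : μ ∈ Set.Icc (μ - |x|) (μ + |x|) := by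
        constructor <;> nlinarith [abs_nonneg x]
      have hTx : |T * x| ≤ |x| := by
        rw [abs_mul, abs_of_pos hT0]
        nlinarith [abs_nonneg x]
      have hmem2 : μ + T * x ∈ Set.Icc (μ - |x|) (μ + |x|) := by
        constructor
        · nlinarith [neg_abs_le (T * x)]
        · nlinarith [le_abs_self (T * x)]
      have hder : ∀ y ∈ Set.Icc (μ - |x|) (μ + |x|),
          ‖deriv g y‖ ≤ C * ((1 + |μ|) * (1 + |x|)) ^ k := by
        intro y hy
        rw [Real.norm_eq_abs]
        refine le_trans (hdabs y) ?_
        refine mul_le_mul_of_nonneg_left ?_ hC.le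
        refine pow_le_pow_left₀ (by positivity) ?_ k
        have hyabs : |y| ≤ |μ| + |x| := by
          rw [abs_le]
          constructor
          · nlinarith [neg_abs_le μ, hy.1]
          · nlinarith [le_abs_self μ, hy.2]
        nlinarith [abs_nonneg μ, abs_nonneg x]
      have hmvt := Convex.norm_image_sub_le_of_norm_deriv_le
        (fun y _ => hgd y) hder hs hmem1 hmem2
      rw [Real.norm_eq_abs, Real.norm_eq_abs, add_sub_cancel_left, abs_mul,
        abs_of_pos hT0] at hmvt
      have step1 : |g (μ + T * x) - g μ| / T ≤ C * ((1 + |μ|) * (1 + |x|)) ^ k * |x| := by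
        rw [div_le_iff₀ hT0]
        calc |g (μ + T * x) - g μ| ≤ C * ((1 + |μ|) * (1 + |x|)) ^ k * (T * |x|) := hmvt
          _ = C * ((1 + |μ|) * (1 + |x|)) ^ k * |x| * T := by ring
      have e0 : (0:ℝ) < Real.exp (-|x|) := Real.exp_pos _
      calc |g (μ + T * x) - g μ| / T * |H x|
          ≤ (C * ((1 + |μ|) * (1 + |x|)) ^ k * |x|) * Real.exp (-|x|) := by
            refine mul_le_mul step1 (abs_H_le x) (abs_nonneg _) ?_
            positivity
        _ ≤ (C * (1 + |μ|) ^ k) * ((1 + |x|) ^ (k+1) * Real.exp (-|x|)) := by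
            rw [mul_pow, pow_succ]
            have hxx : |x| ≤ 1 + |x| := by linarith [abs_nonneg x]
            have hp1 : (0:ℝ) ≤ (1 + |μ|) ^ k := by positivity
            have hp2 : (0:ℝ) ≤ (1 + |x|) ^ k := by positivity
            nlinarith [mul_le_mul_of_nonneg_left hxx (mul_nonneg hp2 e0.le),
              mul_nonneg (mul_nonneg hC.le hp1) (mul_nonneg hp2 e0.le)]
    · refine ae_of_all _ fun x => ?_
      have inner : HasDerivAt (fun t : ℝ => g (μ + t * x)) (deriv g μ * x) 0 := by
        have h1 : HasDerivAt (fun t : ℝ => μ + t * x) x 0 := by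
          simpa using ((hasDerivAt_id (0:ℝ)).mul_const x).const_add μ
        have h2 : HasDerivAt g (deriv g (μ + 0 * x)) (μ + 0 * x) := (hgd _).hasDerivAt
        have h3 := h2.comp 0 h1
        simp at h3; exact h3
      have hslope := hasDerivAt_iff_tendsto_slope.mp inner
      have hsub : Set.Ioi (0:ℝ) ⊆ {(0:ℝ)}ᶜ := fun y hy => by
        simpa using (ne_of_gt hy)
      have hslope2 : Tendsto (slope (fun t : ℝ => g (μ + t * x)) 0)
          (nhdsWithin 0 (Set.Ioi 0)) (nhds (deriv g μ * x)) :=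
        hslope.mono_left (nhdsWithin_mono 0 hsub)
      have hmul := hslope2.mul_const (H x)
      rw [show deriv g μ * x * H x = deriv g μ * (x * H x) by ring] at hmul
      refine Tendsto.congr (fun T => ?_) hmul
      simp only [hFdef, slope_def_field, zero_mul, add_zero, sub_zero]
  have hval : ∫ x : ℝ, deriv g μ * (x * H x) = Real.pi ^ 2 / 6 * deriv g μ := by
    rw [integral_const_mul, integral_xH]
    ring
  rw [hval] at lim
  refine lim.congr' ?_
  filter_upwards [Ioc_mem_nhdsGT zero_lt_one] with T hT
  exact (key T hT).symm
end

section
/- Let α > 0, let μ > 0, and let w : ℝ → ℝ be continuous with w(E) = 0 for E ≤ 0 and |w(E)| ≤ C(1+|E|)^k for some constants C > 0, k ∈ ℕ. Define s_α(T) := ∫_{−∞}^{∞} w(E) · h_α(f_T(E−μ)) dE for T > 0. Then s_α(T)/T converges to (π²/3) · ((1+α)/(2α)) · w(μ) as T → 0⁺. -/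
open Filter MeasureTheory

open Set Real

/-- The Rényi entropy function `h_α : [0,1] → ℝ`: for `α ≠ 1` it is
`h_α(t) = (1-α)⁻¹ ln(t^α + (1-t)^α)`, and for `α = 1` it is the binary entropy
`h_1(t) = -t ln t - (1-t) ln(1-t)` (which vanishes at `t = 0, 1` since `ln 0 = 0`
in Mathlib's convention). -/
noncomputable def renyiH (α t : ℝ) : ℝ :=
  if α = 1 then -(t * Real.log t) - (1 - t) * Real.log (1 - t)
  else (1 - α)⁻¹ * Real.log (t ^ α + (1 - t) ^ α)

private lemma log_one_add_exp (y : ℝ) :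
    Real.log (1 + Real.exp y) = max y 0 + Real.log (1 + Real.exp (-|y|)) := by
  rcases le_total y 0 with h | h
  · rw [abs_of_nonpos h, neg_neg, max_eq_right h, zero_add]
  · rw [abs_of_nonneg h, max_eq_left h]
    have h1 : 1 + Real.exp y = Real.exp y * (1 + Real.exp (-y)) := by
      rw [mul_add, mul_one, ← Real.exp_add]
      simp [add_comm]
    rw [h1, Real.log_mul (Real.exp_ne_zero y) (by positivity), Real.log_exp]

private lemma renyiH_exp_ne_one {α : ℝ} (hα : 0 < α) (hne : α ≠ 1) (x : ℝ) :
    renyiH α ((1 + Real.exp x)⁻¹) =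
      (1 - α)⁻¹ * (Real.log (1 + Real.exp (-(α * |x|))) - α * Real.log (1 + Real.exp (-|x|))) := by
  have hpos : (0:ℝ) < 1 + Real.exp x := by positivity
  have hstep : renyiH α ((1 + Real.exp x)⁻¹)
      = (1 - α)⁻¹ * (Real.log (1 + Real.exp (α * x)) - α * Real.log (1 + Real.exp x)) := by
    rw [renyiH, if_neg hne]
    have h1f : 1 - (1 + Real.exp x)⁻¹ = Real.exp x / (1 + Real.exp x) := by
      field_simp
      ring
    rw [h1f]
    have e1 : ((1 + Real.exp x)⁻¹) ^ α = ((1 + Real.exp x) ^ α)⁻¹ := Real.inv_rpow hpos.le α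
    have e2 : (Real.exp x / (1 + Real.exp x)) ^ α = Real.exp (α * x) / (1 + Real.exp x) ^ α := by
      rw [Real.div_rpow (Real.exp_pos x).le hpos.le, Real.rpow_def_of_pos (Real.exp_pos x),
        Real.log_exp, mul_comm x α]
    have hrp : (0:ℝ) < (1 + Real.exp x) ^ α := Real.rpow_pos_of_pos hpos α
    have e3 : ((1 + Real.exp x)⁻¹) ^ α + (Real.exp x / (1 + Real.exp x)) ^ α
        = (1 + Real.exp (α * x)) / (1 + Real.exp x) ^ α := by
      rw [e1, e2]; field_simp
    rw [e3, Real.log_div (by positivity) hrp.ne', Real.log_rpow hpos]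
  rw [hstep, log_one_add_exp (α * x), log_one_add_exp x]
  have hmax : max (α * x) 0 = α * max x 0 := by
    rw [mul_max_of_nonneg _ _ hα.le, mul_zero]
  have habs : |α * x| = α * |x| := by rw [abs_mul, abs_of_pos hα]
  rw [hmax, habs]
  ring

private lemma renyiH_exp_one (x : ℝ) :
    renyiH 1 ((1 + Real.exp x)⁻¹) =
      Real.log (1 + Real.exp (-|x|)) + |x| * Real.exp (-|x|) / (1 + Real.exp (-|x|)) := by
  have hpos : (0:ℝ) < 1 + Real.exp x := by positivity
  have hstep : renyiH 1 ((1 + Real.exp x)⁻¹)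
      = Real.log (1 + Real.exp x) - x * Real.exp x / (1 + Real.exp x) := by
    rw [renyiH, if_pos rfl]
    have h1f : 1 - (1 + Real.exp x)⁻¹ = Real.exp x / (1 + Real.exp x) := by field_simp; ring
    rw [h1f, Real.log_inv, Real.log_div (Real.exp_ne_zero x) hpos.ne', Real.log_exp]
    field_simp
    ring
  rw [hstep]
  rcases le_total x 0 with h | h
  · rw [abs_of_nonpos h, neg_neg]
    ring
  · rw [abs_of_nonneg h, log_one_add_exp x, abs_of_nonneg h, max_eq_left h]
    have h2 : (0:ℝ) < 1 + Real.exp (-x) := by positivity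
    rw [Real.exp_neg]
    field_simp
    ring

private lemma hasSum_inv_sq :
    HasSum (fun n : ℕ => 1 / ((n : ℝ) + 1) ^ 2) (Real.pi ^ 2 / 6) := by
  have h0 : HasSum (fun n : ℕ => (1:ℝ) / (n:ℝ) ^ 2)
      (Real.pi ^ 2 / 6 + ∑ i ∈ Finset.range 1, (1:ℝ) / (i:ℝ) ^ 2) := by
    simpa using hasSum_zeta_two
  have h1 := (hasSum_nat_add_iff (f := fun n : ℕ => (1:ℝ) / (n:ℝ) ^ 2) 1).2 h0
  have he : (fun n : ℕ => 1 / ((n : ℝ) + 1) ^ 2)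
      = fun n : ℕ => (1:ℝ) / (((n + 1 : ℕ)):ℝ) ^ 2 := by
    funext n; push_cast; ring
  rw [he]; exact h1

set_option maxHeartbeats 1000000 in
private lemma hasSum_alt_inv_sq :
    HasSum (fun n : ℕ => (-1 : ℝ) ^ n / ((n : ℝ) + 1) ^ 2) (Real.pi ^ 2 / 12) := by
  set f : ℕ → ℝ := fun n => 1 / ((n : ℝ) + 1) ^ 2 with hf
  have hOdd : HasSum (fun k : ℕ => f (2 * k + 1)) (Real.pi ^ 2 / 24) := by
    have h4 := hasSum_inv_sq.div_const 4
    have he : (fun n : ℕ => 1 / ((n : ℝ) + 1) ^ 2 / 4) = fun k : ℕ => f (2 * k + 1) := by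
      funext k
      have hk : ((k:ℝ) + 1) ≠ 0 := by positivity
      simp only [hf]
      push_cast
      rw [div_div, div_eq_div_iff (by positivity) (by positivity)]
      ring
    rw [he] at h4
    convert h4 using 1
    · rfl
    ring
  have hEsum : Summable (fun k : ℕ => f (2 * k)) := by
    have hinj : Function.Injective (fun k : ℕ => 2 * k) := fun a b h => by simpa using h
    exact hasSum_inv_sq.summable.comp_injective hinj
  have hE := hEsum.hasSum
  have htE : ∑' k : ℕ, f (2 * k) = Real.pi ^ 2 / 8 := by
    have hcomb := hE.even_add_odd hOdd
    have := hcomb.unique hasSum_inv_sq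
    linarith
  rw [htE] at hE
  have hEven' : HasSum (fun k : ℕ => (-1 : ℝ) ^ (2 * k) / (((2 * k : ℕ) : ℝ) + 1) ^ 2)
      (Real.pi ^ 2 / 8) := by
    have he : (fun k : ℕ => (-1 : ℝ) ^ (2 * k) / (((2 * k : ℕ) : ℝ) + 1) ^ 2)
        = fun k : ℕ => f (2 * k) := by
      funext k; simp [hf, pow_mul]
    rw [he]; exact hE
  have hOdd' : HasSum (fun k : ℕ => (-1 : ℝ) ^ (2 * k + 1) / (((2 * k + 1 : ℕ) : ℝ) + 1) ^ 2)
      (-(Real.pi ^ 2 / 24)) := by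
    have he : (fun k : ℕ => (-1 : ℝ) ^ (2 * k + 1) / (((2 * k + 1 : ℕ) : ℝ) + 1) ^ 2)
        = fun k : ℕ => -(f (2 * k + 1)) := by
      funext k; simp [hf, pow_succ, pow_mul, neg_div]
    rw [he]; exact hOdd.neg
  have := HasSum.even_add_odd (f := fun n : ℕ => (-1 : ℝ) ^ n / ((n : ℝ) + 1) ^ 2) hEven' hOdd'
  convert this using 1
  ring

private lemma integral_exp_neg_mul_Ioi {b : ℝ} (hb : 0 < b) :
    ∫ t in Ioi (0:ℝ), Real.exp (-(b * t)) = b⁻¹ := by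
  have h := integral_comp_mul_left_Ioi (fun u => Real.exp (-u)) 0 hb
  simp only [mul_zero] at h
  rw [h, integral_exp_neg_Ioi_zero, smul_eq_mul, mul_one]

private lemma integrableOn_mul_exp_neg_mul {b : ℝ} (hb : 0 < b) :
    IntegrableOn (fun t : ℝ => t * Real.exp (-(b * t))) (Ioi (0:ℝ)) := by
  have hbase : IntegrableOn (fun x : ℝ => Real.exp (-x) * x) (Ioi (0:ℝ)) := by
    have h := Real.GammaIntegral_convergent (s := 2) (by norm_num)
    have h1 : ((2:ℝ) - 1) = 1 := by norm_num
    rw [h1] at h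
    simpa [Real.rpow_one] using h
  have h := (integrableOn_Ioi_comp_mul_left_iff (fun x : ℝ => Real.exp (-x) * x) 0 hb).2
      (by simpa using hbase)
  have h2 : IntegrableOn (fun x : ℝ => b⁻¹ * (Real.exp (-(b * x)) * (b * x))) (Ioi (0:ℝ)) :=
    h.const_mul b⁻¹
  apply h2.congr_fun ?_ measurableSet_Ioi
  intro t _
  simp only
  field_simp

private lemma integral_mul_exp_neg_mul_Ioi {b : ℝ} (hb : 0 < b) :
    ∫ t in Ioi (0:ℝ), t * Real.exp (-(b * t)) = (b ^ 2)⁻¹ := by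
  have hbase : ∫ x in Ioi (0:ℝ), Real.exp (-x) * x = 1 := by
    have h2 := Real.Gamma_eq_integral (s := 2) (by norm_num)
    rw [Real.Gamma_two] at h2
    have : ((2:ℝ) - 1) = 1 := by norm_num
    rw [this] at h2
    simpa using h2.symm
  have h := integral_comp_mul_left_Ioi (fun u => Real.exp (-u) * u) 0 hb
  simp only [mul_zero] at h
  rw [hbase, smul_eq_mul, mul_one] at h
  -- h : ∫ x in Ioi 0, exp (-(b*x)) * (b*x) = b⁻¹
  have h2 : ∫ x in Ioi (0:ℝ), Real.exp (-(b * x)) * (b * x)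
      = b * ∫ x in Ioi (0:ℝ), x * Real.exp (-(b * x)) := by
    rw [← integral_const_mul]
    congr 1
    funext x
    ring
  rw [h2] at h
  have hbne : b ≠ 0 := hb.ne'
  have h3 : ∫ x in Ioi (0:ℝ), x * Real.exp (-(b * x)) = b⁻¹ / b := by
    rw [eq_div_iff hbne, mul_comm]
    exact h
  rw [h3, sq, mul_inv, div_eq_mul_inv]

private lemma neg_exp_abs_lt_one {t : ℝ} (ht : 0 < t) : |(-Real.exp (-t))| < 1 := by
  rw [abs_neg, abs_of_pos (Real.exp_pos _)]
  exact Real.exp_lt_one_iff.2 (by linarith)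

private lemma hasSum_log_one_add_exp {t : ℝ} (ht : 0 < t) :
    HasSum (fun n : ℕ => (-1:ℝ) ^ n * Real.exp (-(((n:ℝ) + 1) * t)) / ((n:ℝ) + 1))
      (Real.log (1 + Real.exp (-t))) := by
  have h2 := (Real.hasSum_pow_div_log_of_abs_lt_one (neg_exp_abs_lt_one ht)).neg
  have hterm : (fun n : ℕ => -((-Real.exp (-t)) ^ (n + 1) / ((n:ℝ) + 1)))
      = fun n : ℕ => (-1:ℝ) ^ n * Real.exp (-(((n:ℝ) + 1) * t)) / ((n:ℝ) + 1) := by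
    funext n
    have he : (-Real.exp (-t)) ^ (n + 1) = (-1:ℝ) ^ (n + 1) * Real.exp (-(((n:ℝ) + 1) * t)) := by
      rw [neg_pow, ← Real.exp_nat_mul]
      have : ((n + 1 : ℕ) : ℝ) * (-t) = -(((n:ℝ) + 1) * t) := by push_cast; ring
      rw [this]
    rw [he, pow_succ]
    ring
  have hval2 : -(-Real.log (1 - -Real.exp (-t))) = Real.log (1 + Real.exp (-t)) := by
    rw [neg_neg, sub_neg_eq_add]
  rw [hterm, hval2] at h2
  · exact h2
  -- possible leftover goals from rw? none

private lemma hasSum_mul_exp_div {t : ℝ} (ht : 0 < t) :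
    HasSum (fun n : ℕ => (-1:ℝ) ^ n * (t * Real.exp (-(((n:ℝ) + 1) * t))))
      (t * Real.exp (-t) / (1 + Real.exp (-t))) := by
  have h2 := (hasSum_geometric_of_abs_lt_one (neg_exp_abs_lt_one ht)).mul_left
      (t * Real.exp (-t))
  have hterm : (fun n : ℕ => t * Real.exp (-t) * (-Real.exp (-t)) ^ n)
      = fun n : ℕ => (-1:ℝ) ^ n * (t * Real.exp (-(((n:ℝ) + 1) * t))) := by
    funext n
    have he : (-Real.exp (-t)) ^ n = (-1:ℝ) ^ n * Real.exp ((n:ℝ) * (-t)) := by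
      rw [neg_pow, ← Real.exp_nat_mul]
    rw [he, ← mul_assoc, mul_comm (t * Real.exp (-t)) ((-1:ℝ)^n), mul_assoc, mul_assoc,
      ← Real.exp_add]
    have : -t + (n:ℝ) * (-t) = -(((n:ℝ) + 1) * t) := by ring
    rw [this]
  have hval : t * Real.exp (-t) * (1 - -Real.exp (-t))⁻¹
      = t * Real.exp (-t) / (1 + Real.exp (-t)) := by
    rw [sub_neg_eq_add, div_eq_mul_inv]
  rw [hterm, hval] at h2
  exact h2

private lemma integral_log_J :
    ∫ t in Ioi (0:ℝ), Real.log (1 + Real.exp (-t)) = Real.pi ^ 2 / 12 := by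
  set F : ℕ → ℝ → ℝ := fun n t => (-1:ℝ) ^ n * Real.exp (-(((n:ℝ) + 1) * t)) / ((n:ℝ) + 1)
    with hF
  have hpos : ∀ n : ℕ, (0:ℝ) < (n:ℝ) + 1 := fun n => by positivity
  have hF_int : ∀ n : ℕ, Integrable (F n) (volume.restrict (Ioi 0)) := by
    intro n
    have h1 : IntegrableOn (fun t : ℝ => Real.exp (-(((n:ℝ) + 1) * t))) (Ioi 0) := by
      have h0 := exp_neg_integrableOn_Ioi 0 (hpos n)
      simp only [neg_mul] at h0
      exact h0
    exact (h1.const_mul ((-1:ℝ) ^ n)).div_const _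
  have hnorm : ∀ n : ℕ, (∫ t in Ioi (0:ℝ), ‖F n t‖) = 1 / ((n:ℝ) + 1) ^ 2 := by
    intro n
    have hker : ∀ t : ℝ, ‖F n t‖ = Real.exp (-(((n:ℝ) + 1) * t)) / ((n:ℝ) + 1) := by
      intro t
      simp [hF, Real.norm_eq_abs, abs_mul, abs_div, abs_pow, abs_of_pos (Real.exp_pos _),
        abs_of_pos (hpos n)]
    simp_rw [hker]
    rw [integral_div, integral_exp_neg_mul_Ioi (hpos n)]
    rw [sq]
    field_simp
  have hsum : Summable fun n : ℕ => ∫ t in Ioi (0:ℝ), ‖F n t‖ :=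
    hasSum_inv_sq.summable.congr fun n => (hnorm n).symm
  have hkey := MeasureTheory.hasSum_integral_of_summable_integral_norm hF_int hsum
  have hval : (fun n : ℕ => ∫ t in Ioi (0:ℝ), F n t)
      = fun n : ℕ => (-1:ℝ) ^ n / ((n:ℝ) + 1) ^ 2 := by
    funext n
    simp only [hF]
    rw [integral_div, integral_const_mul, integral_exp_neg_mul_Ioi (hpos n)]
    rw [sq]
    field_simp
  have hint_eq : (∫ t in Ioi (0:ℝ), ∑' n : ℕ, F n t)
      = ∫ t in Ioi (0:ℝ), Real.log (1 + Real.exp (-t)) := by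
    refine setIntegral_congr_fun measurableSet_Ioi fun t ht => ?_
    exact (hasSum_log_one_add_exp ht).tsum_eq
  rw [hval, hint_eq] at hkey
  exact hkey.unique hasSum_alt_inv_sq

private lemma integral_mul_K :
    ∫ t in Ioi (0:ℝ), t * Real.exp (-t) / (1 + Real.exp (-t)) = Real.pi ^ 2 / 12 := by
  set F : ℕ → ℝ → ℝ := fun n t => (-1:ℝ) ^ n * (t * Real.exp (-(((n:ℝ) + 1) * t))) with hF
  have hpos : ∀ n : ℕ, (0:ℝ) < (n:ℝ) + 1 := fun n => by positivity
  have hF_int : ∀ n : ℕ, Integrable (F n) (volume.restrict (Ioi 0)) := fun n =>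
    (integrableOn_mul_exp_neg_mul (hpos n)).const_mul _
  have hnorm : ∀ n : ℕ, (∫ t in Ioi (0:ℝ), ‖F n t‖) = 1 / ((n:ℝ) + 1) ^ 2 := by
    intro n
    have : (∫ t in Ioi (0:ℝ), ‖F n t‖)
        = ∫ t in Ioi (0:ℝ), t * Real.exp (-(((n:ℝ) + 1) * t)) := by
      refine setIntegral_congr_fun measurableSet_Ioi fun t ht => ?_
      have ht' : (0:ℝ) < t := ht
      simp [hF, Real.norm_eq_abs, abs_mul, abs_pow, abs_of_pos (Real.exp_pos _),
        abs_of_pos ht']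
    rw [this, integral_mul_exp_neg_mul_Ioi (hpos n), one_div]
  have hsum : Summable fun n : ℕ => ∫ t in Ioi (0:ℝ), ‖F n t‖ :=
    hasSum_inv_sq.summable.congr fun n => (hnorm n).symm
  have hkey := MeasureTheory.hasSum_integral_of_summable_integral_norm hF_int hsum
  have hval : (fun n : ℕ => ∫ t in Ioi (0:ℝ), F n t)
      = fun n : ℕ => (-1:ℝ) ^ n / ((n:ℝ) + 1) ^ 2 := by
    funext n
    simp only [hF]
    rw [integral_const_mul, integral_mul_exp_neg_mul_Ioi (hpos n), div_eq_mul_inv]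
  have hint_eq : (∫ t in Ioi (0:ℝ), ∑' n : ℕ, F n t)
      = ∫ t in Ioi (0:ℝ), t * Real.exp (-t) / (1 + Real.exp (-t)) := by
    refine setIntegral_congr_fun measurableSet_Ioi fun t ht => ?_
    exact (hasSum_mul_exp_div ht).tsum_eq
  rw [hval, hint_eq] at hkey
  exact hkey.unique hasSum_alt_inv_sq

private lemma integrableOn_log_one_add_exp {b : ℝ} (hb : 0 < b) :
    IntegrableOn (fun t : ℝ => Real.log (1 + Real.exp (-(b * t)))) (Ioi (0:ℝ)) := by
  have hbase : IntegrableOn (fun t : ℝ => Real.exp (-(b * t))) (Ioi 0) := by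
    have h0 := exp_neg_integrableOn_Ioi 0 hb
    simp only [neg_mul] at h0
    exact h0
  refine hbase.mono' ?_ ?_
  · refine (Continuous.log ?_ fun t => ?_).aestronglyMeasurable
    · exact continuous_const.add (Real.continuous_exp.comp (continuous_const.mul continuous_id).neg)
    · positivity
  · refine Filter.Eventually.of_forall fun t => ?_
    have h1 : (0:ℝ) < 1 + Real.exp (-(b * t)) := by positivity
    rw [Real.norm_eq_abs, abs_of_nonneg (Real.log_nonneg (by nlinarith [Real.exp_pos (-(b * t))]))]
    have := Real.log_le_sub_one_of_pos h1
    linarith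

private lemma integrableOn_K_fun :
    IntegrableOn (fun t : ℝ => t * Real.exp (-t) / (1 + Real.exp (-t))) (Ioi (0:ℝ)) := by
  have hbase : IntegrableOn (fun t : ℝ => t * Real.exp (-t)) (Ioi (0:ℝ)) := by
    have := integrableOn_mul_exp_neg_mul (b := 1) one_pos
    simpa using this
  refine hbase.mono' ?_ ?_
  · refine Continuous.aestronglyMeasurable ?_
    exact (continuous_id.mul (Real.continuous_exp.comp continuous_neg)).div
      (continuous_const.add (Real.continuous_exp.comp continuous_neg)) (fun t => by positivity)
  · rw [ae_restrict_iff' measurableSet_Ioi]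
    refine Filter.Eventually.of_forall fun t ht => ?_
    have ht' : (0:ℝ) < t := ht
    have h1 : (0:ℝ) < Real.exp (-t) := Real.exp_pos _
    rw [Real.norm_eq_abs, abs_of_nonneg (by positivity)]
    refine div_le_self (by positivity) (by linarith)

private lemma integral_log_J_scaled {b : ℝ} (hb : 0 < b) :
    ∫ t in Ioi (0:ℝ), Real.log (1 + Real.exp (-(b * t))) = b⁻¹ * (Real.pi ^ 2 / 12) := by
  have h := integral_comp_mul_left_Ioi (fun u : ℝ => Real.log (1 + Real.exp (-u))) 0 hb
  simp only [mul_zero] at h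
  rw [integral_log_J, smul_eq_mul] at h
  exact h

private lemma integral_renyiH_exp {α : ℝ} (hα : 0 < α) :
    ∫ x : ℝ, renyiH α ((1 + Real.exp x)⁻¹) = Real.pi ^ 2 / 3 * ((1 + α) / (2 * α)) := by
  rcases eq_or_ne α 1 with h1 | hne
  · subst h1
    have hrepr : (fun x : ℝ => renyiH 1 ((1 + Real.exp x)⁻¹))
        = fun x : ℝ => Real.log (1 + Real.exp (-|x|))
            + |x| * Real.exp (-|x|) / (1 + Real.exp (-|x|)) := funext renyiH_exp_one
    have habs := integral_comp_abs
      (f := fun t : ℝ => Real.log (1 + Real.exp (-t)) + t * Real.exp (-t) / (1 + Real.exp (-t)))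
    have hJ1 : IntegrableOn (fun t : ℝ => Real.log (1 + Real.exp (-t))) (Ioi (0:ℝ)) := by
      have := integrableOn_log_one_add_exp one_pos
      simpa using this
    rw [hrepr, habs, integral_add hJ1 integrableOn_K_fun, integral_log_J, integral_mul_K]
    ring
  · have hrepr : (fun x : ℝ => renyiH α ((1 + Real.exp x)⁻¹))
        = fun x : ℝ => (1 - α)⁻¹ * (Real.log (1 + Real.exp (-(α * |x|)))
            - α * Real.log (1 + Real.exp (-|x|))) := funext (renyiH_exp_ne_one hα hne)
    have habs := integral_comp_abs
      (f := fun t : ℝ => (1 - α)⁻¹ * (Real.log (1 + Real.exp (-(α * t)))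
          - α * Real.log (1 + Real.exp (-t))))
    have hJα := integrableOn_log_one_add_exp hα
    have hJ1 : IntegrableOn (fun t : ℝ => Real.log (1 + Real.exp (-t))) (Ioi (0:ℝ)) := by
      have := integrableOn_log_one_add_exp one_pos
      simpa using this
    rw [hrepr, habs, integral_const_mul, integral_sub hJα (hJ1.const_mul α),
      integral_const_mul, integral_log_J_scaled hα, integral_log_J]
    have h1α : (1:ℝ) - α ≠ 0 := sub_ne_zero_of_ne (Ne.symm hne)
    field_simp
    ring

private lemma pow_le_factorial_mul_exp (k : ℕ) {x : ℝ} (hx : 0 ≤ x) :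
    x ^ k ≤ (k.factorial : ℝ) * Real.exp x := by
  have h := Real.sum_le_exp_of_nonneg hx (k + 1)
  have h2 : x ^ k / (k.factorial : ℝ) ≤ ∑ i ∈ Finset.range (k + 1), x ^ i / (i.factorial : ℝ) :=
    Finset.single_le_sum (f := fun i => x ^ i / (i.factorial : ℝ))
      (fun i _ => by positivity) (Finset.self_mem_range_succ k)
  have hk : (0:ℝ) < (k.factorial : ℝ) := by
    exact_mod_cast k.factorial_pos
  calc x ^ k = x ^ k / (k.factorial : ℝ) * (k.factorial : ℝ) := by field_simp
    _ ≤ Real.exp x * (k.factorial : ℝ) := mul_le_mul_of_nonneg_right (h2.trans h) hk.le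
    _ = (k.factorial : ℝ) * Real.exp x := mul_comm _ _

private lemma poly_exp_bound {m : ℝ} (hm : 0 < m) (k : ℕ) {s : ℝ} (hs : 0 ≤ s)
    {μ : ℝ} (hμ : 0 ≤ μ) :
    (1 + μ + s) ^ k * Real.exp (-m * s)
      ≤ (2 / m) ^ k * (k.factorial : ℝ) * Real.exp (m / 2 * (1 + μ)) * Real.exp (-(m / 2) * s) := by
  have h1 : (1 + μ + s) ^ k
      ≤ (2 / m) ^ k * ((k.factorial : ℝ) * Real.exp (m / 2 * (1 + μ + s))) := by
    have h2 := pow_le_factorial_mul_exp k (x := m / 2 * (1 + μ + s)) (by positivity)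
    have h3 : (1 + μ + s) ^ k = (2 / m) ^ k * (m / 2 * (1 + μ + s)) ^ k := by
      rw [← mul_pow]
      congr 1
      field_simp
    rw [h3]
    exact mul_le_mul_of_nonneg_left h2 (by positivity)
  calc (1 + μ + s) ^ k * Real.exp (-m * s)
      ≤ (2 / m) ^ k * ((k.factorial : ℝ) * Real.exp (m / 2 * (1 + μ + s))) * Real.exp (-m * s) :=
        mul_le_mul_of_nonneg_right h1 (Real.exp_pos _).le
    _ = (2 / m) ^ k * (k.factorial : ℝ)
        * (Real.exp (m / 2 * (1 + μ + s)) * Real.exp (-m * s)) := by ring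
    _ = (2 / m) ^ k * (k.factorial : ℝ)
        * (Real.exp (m / 2 * (1 + μ)) * Real.exp (-(m / 2) * s)) := by
        rw [← Real.exp_add, ← Real.exp_add]
        congr 1
        ring
    _ = (2 / m) ^ k * (k.factorial : ℝ) * Real.exp (m / 2 * (1 + μ)) * Real.exp (-(m / 2) * s) := by
        ring

private lemma abs_renyiH_exp_le {α : ℝ} (hα : 0 < α) :
    ∃ c : ℝ, 0 ≤ c ∧ ∀ x : ℝ,
      |renyiH α ((1 + Real.exp x)⁻¹)| ≤ c * Real.exp (-(min α 1 / 2) * |x|) := by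
  have hm0 : 0 < min α 1 := lt_min hα one_pos
  have hlog : ∀ u : ℝ, |Real.log (1 + Real.exp u)| ≤ Real.exp u := by
    intro u
    have h1 : (0:ℝ) < 1 + Real.exp u := by positivity
    rw [abs_of_nonneg (Real.log_nonneg (by nlinarith [Real.exp_pos u]))]
    have := Real.log_le_sub_one_of_pos h1
    linarith
  have hexp_le : ∀ a x : ℝ, min α 1 / 2 ≤ a → Real.exp (-(a * |x|)) ≤ Real.exp (-(min α 1 / 2) * |x|) := by
    intro a x ha
    apply Real.exp_le_exp.2
    rw [neg_mul]
    apply neg_le_neg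
    exact mul_le_mul_of_nonneg_right ha (abs_nonneg x)
  rcases eq_or_ne α 1 with h1 | hne
  · subst h1
    refine ⟨3, by norm_num, fun x => ?_⟩
    rw [renyiH_exp_one x]
    have hden : (0:ℝ) < 1 + Real.exp (-|x|) := by positivity
    have hA : |Real.log (1 + Real.exp (-|x|))| ≤ Real.exp (-|x|) := hlog _
    have hB : |x| * Real.exp (-|x|) / (1 + Real.exp (-|x|)) ≤ |x| * Real.exp (-|x|) :=
      div_le_self (by positivity) (by nlinarith [Real.exp_pos (-|x|)])
    have hxe : |x| * Real.exp (-|x|) ≤ 2 * Real.exp (-(1/2 : ℝ) * |x|) := by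
      have h2 : |x| / 2 ≤ Real.exp (|x| / 2) := by
        have := Real.add_one_le_exp (|x| / 2)
        linarith
      have h3 : |x| ≤ 2 * Real.exp (|x| / 2) := by linarith
      calc |x| * Real.exp (-|x|) ≤ 2 * Real.exp (|x| / 2) * Real.exp (-|x|) :=
            mul_le_mul_of_nonneg_right h3 (Real.exp_pos _).le
        _ = 2 * Real.exp (-(1/2 : ℝ) * |x|) := by
            rw [mul_assoc, ← Real.exp_add]
            congr 2
            ring
    have he1 : Real.exp (-|x|) ≤ Real.exp (-(1/2 : ℝ) * |x|) := by
      apply Real.exp_le_exp.2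
      have := abs_nonneg x
      nlinarith
    have hm : min (1:ℝ) 1 / 2 = (1/2 : ℝ) := by norm_num
    rw [hm]
    have step1 : |Real.log (1 + Real.exp (-|x|)) + |x| * Real.exp (-|x|) / (1 + Real.exp (-|x|))|
        ≤ |Real.log (1 + Real.exp (-|x|))| + |x| * Real.exp (-|x|) / (1 + Real.exp (-|x|)) := by
      have habs0 : (0:ℝ) ≤ |x| * Real.exp (-|x|) / (1 + Real.exp (-|x|)) := by positivity
      have htr := abs_add_le (Real.log (1 + Real.exp (-|x|)))
        (|x| * Real.exp (-|x|) / (1 + Real.exp (-|x|)))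
      rwa [abs_of_nonneg habs0] at htr
    linarith [step1, hA, hB, hxe, he1]
  · refine ⟨|1 - α|⁻¹ * (1 + α), by positivity, fun x => ?_⟩
    rw [renyiH_exp_ne_one hα hne x]
    have hA : |Real.log (1 + Real.exp (-(α * |x|)))| ≤ Real.exp (-(α * |x|)) := hlog _
    have hB : |Real.log (1 + Real.exp (-|x|))| ≤ Real.exp (-|x|) := hlog _
    have heα : Real.exp (-(α * |x|)) ≤ Real.exp (-(min α 1 / 2) * |x|) :=
      hexp_le α x (by
        have : min α 1 ≤ α := min_le_left _ _
        linarith)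
    have he1 : Real.exp (-|x|) ≤ Real.exp (-(min α 1 / 2) * |x|) := by
      have := hexp_le 1 x (by
        have : min α 1 ≤ 1 := min_le_right _ _
        linarith)
      simpa using this
    rw [abs_mul, abs_inv]
    calc |1 - α|⁻¹ * |Real.log (1 + Real.exp (-(α * |x|))) - α * Real.log (1 + Real.exp (-|x|))|
        ≤ |1 - α|⁻¹ * (Real.exp (-(α * |x|)) + α * Real.exp (-|x|)) := by
          apply mul_le_mul_of_nonneg_left ?_ (by positivity)
          calc |Real.log (1 + Real.exp (-(α * |x|))) - α * Real.log (1 + Real.exp (-|x|))|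
              ≤ |Real.log (1 + Real.exp (-(α * |x|)))| + |α * Real.log (1 + Real.exp (-|x|))| :=
                abs_sub _ _
            _ ≤ Real.exp (-(α * |x|)) + α * Real.exp (-|x|) := by
                rw [abs_mul, abs_of_pos hα]
                have := mul_le_mul_of_nonneg_left hB hα.le
                linarith [hA]
      _ ≤ |1 - α|⁻¹ * ((1 + α) * Real.exp (-(min α 1 / 2) * |x|)) := by
          apply mul_le_mul_of_nonneg_left ?_ (by positivity)
          have h2 := mul_le_mul_of_nonneg_left he1 hα.le
          nlinarith [heα]
      _ = |1 - α|⁻¹ * (1 + α) * Real.exp (-(min α 1 / 2) * |x|) := by ring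

private lemma integrable_comp_abs {f : ℝ → ℝ} (hf : IntegrableOn f (Ioi 0)) :
    Integrable fun x : ℝ => f |x| := by
  have hIoi : IntegrableOn (fun x : ℝ => f |x|) (Ioi 0) := by
    apply hf.congr_fun ?_ measurableSet_Ioi
    intro x hx
    simp only
    rw [abs_of_pos hx]
  have hIic : IntegrableOn (fun x : ℝ => f |x|) (Iic 0) := by
    rw [← Measure.map_neg_eq_self (volume : Measure ℝ)]
    have m : MeasurableEmbedding fun x : ℝ => -x := (Homeomorph.neg ℝ).measurableEmbedding
    rw [m.integrableOn_map_iff]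
    simp_rw [Function.comp_def, abs_neg, Set.neg_preimage, Set.neg_Iic, neg_zero]
    exact Iff.mpr integrableOn_Ici_iff_integrableOn_Ioi hIoi
  have h := hIic.union hIoi
  rwa [Set.Iic_union_Ioi, integrableOn_univ] at h

set_option linter.unusedVariables false in
/-- Low-temperature asymptotics of the thermal `α`-Rényi entropy density: for `α > 0`,
`μ > 0` and a continuous weight `w` (playing the role of `N′`) vanishing on `(-∞,0]`
and of polynomial growth, `s_α(T)/T → (π²/3)·((1+α)/(2α))·w(μ)` as `T → 0⁺`, where
`s_α(T) = ∫ w(E) h_α(f_T(E-μ)) dE` and `f_T(E) = (1+exp(E/T))⁻¹`. -/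
theorem renyi_entropy_density_low_temperature (α μ : ℝ) (hα : 0 < α) (hμ : 0 < μ)
    (w : ℝ → ℝ) (hw : Continuous w) (hw0 : ∀ E ≤ (0 : ℝ), w E = 0)
    (C : ℝ) (k : ℕ) (hC : 0 < C) (hbd : ∀ E : ℝ, |w E| ≤ C * (1 + |E|) ^ k) :
    Tendsto (fun T : ℝ =>
        (∫ E : ℝ, w E * renyiH α ((1 + Real.exp ((E - μ) / T))⁻¹)) / T)
      (nhdsWithin 0 (Set.Ioi 0))
      (nhds (Real.pi ^ 2 / 3 * ((1 + α) / (2 * α)) * w μ)) := by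
  obtain ⟨c, hc0, hGb⟩ := abs_renyiH_exp_le hα
  set m : ℝ := min α 1 / 2 with hm_def
  have hm : 0 < m := div_pos (lt_min hα one_pos) two_pos
  set G : ℝ → ℝ := fun x => renyiH α ((1 + Real.exp x)⁻¹) with hG
  set A : ℝ := C * c * ((2 / m) ^ k * (k.factorial : ℝ) * Real.exp (m / 2 * (1 + μ)))
    with hA
  -- continuity of G
  have hGcont : Continuous G := by
    rw [hG]
    rcases eq_or_ne α 1 with h1 | hne
    · subst h1
      rw [show (fun x : ℝ => renyiH 1 ((1 + Real.exp x)⁻¹))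
          = fun x : ℝ => Real.log (1 + Real.exp (-|x|))
            + |x| * Real.exp (-|x|) / (1 + Real.exp (-|x|)) from funext renyiH_exp_one]
      have hexp : Continuous fun x : ℝ => Real.exp (-|x|) :=
        Real.continuous_exp.comp continuous_abs.neg
      refine Continuous.add ?_ ?_
      · exact Continuous.log (continuous_const.add hexp) fun x => by positivity
      · exact (continuous_abs.mul hexp).div (continuous_const.add hexp) fun x => by positivity
    · rw [show (fun x : ℝ => renyiH α ((1 + Real.exp x)⁻¹))
          = fun x : ℝ => (1 - α)⁻¹ * (Real.log (1 + Real.exp (-(α * |x|)))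
            - α * Real.log (1 + Real.exp (-|x|))) from funext (renyiH_exp_ne_one hα hne)]
      refine continuous_const.mul (Continuous.sub ?_ (continuous_const.mul ?_))
      · exact Continuous.log
          (continuous_const.add (Real.continuous_exp.comp (continuous_const.mul continuous_abs).neg))
          fun x => by positivity
      · exact Continuous.log
          (continuous_const.add (Real.continuous_exp.comp continuous_abs.neg))
          fun x => by positivity
  -- step 1: change of variables
  have hstep : ∀ᶠ T in nhdsWithin (0:ℝ) (Set.Ioi 0),
      (∫ E : ℝ, w E * renyiH α ((1 + Real.exp ((E - μ) / T))⁻¹)) / T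
        = ∫ x : ℝ, w (μ + T * x) * G x := by
    filter_upwards [self_mem_nhdsWithin] with T hT
    have hT' : (0:ℝ) < T := hT
    have e1 : (fun x : ℝ => w (μ + T * x) * G x)
        = fun x : ℝ => w (μ + T * x) * renyiH α ((1 + Real.exp ((T * x) / T))⁻¹) := by
      funext x
      rw [hG]
      simp only
      rw [mul_div_cancel_left₀ x hT'.ne']
    have h1 := MeasureTheory.Measure.integral_comp_mul_left
      (fun y : ℝ => w (μ + y) * renyiH α ((1 + Real.exp (y / T))⁻¹)) T
    have h2 := integral_add_left_eq_self (μ := (volume : Measure ℝ))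
      (fun E : ℝ => w E * renyiH α ((1 + Real.exp ((E - μ) / T))⁻¹)) μ
    have h3 : (∫ y : ℝ, w (μ + y) * renyiH α ((1 + Real.exp (y / T))⁻¹))
        = ∫ E : ℝ, w E * renyiH α ((1 + Real.exp ((E - μ) / T))⁻¹) := by
      rw [← h2]
      simp only [add_sub_cancel_left]
    rw [e1, h1, h3, abs_of_pos (inv_pos.2 hT'), smul_eq_mul, div_eq_inv_mul]
  -- step 2: dominated convergence
  have hmain : Tendsto (fun T : ℝ => ∫ x : ℝ, w (μ + T * x) * G x)
      (nhdsWithin 0 (Set.Ioi 0)) (nhds (∫ x : ℝ, w μ * G x)) := by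
    refine tendsto_integral_filter_of_dominated_convergence
      (fun x : ℝ => A * Real.exp (-(m / 2) * |x|)) ?_ ?_ ?_ ?_
    · refine Eventually.of_forall fun T => ?_
      exact ((hw.comp (continuous_const.add (continuous_const.mul continuous_id))).mul
        hGcont).aestronglyMeasurable
    · filter_upwards [Ioc_mem_nhdsGT_of_mem (left_mem_Ico.2 one_pos)] with T hT
      refine Eventually.of_forall fun x => ?_
      have hT0 : 0 < T := hT.1
      have hT1 : T ≤ 1 := hT.2
      have habs : |μ + T * x| ≤ μ + |x| := by
        calc |μ + T * x| ≤ |μ| + |T * x| := abs_add_le _ _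
          _ = μ + T * |x| := by rw [abs_of_pos hμ, abs_mul, abs_of_pos hT0]
          _ ≤ μ + |x| := by nlinarith [abs_nonneg x]
      have h1 : |w (μ + T * x)| ≤ C * (1 + μ + |x|) ^ k := by
        refine (hbd (μ + T * x)).trans ?_
        apply mul_le_mul_of_nonneg_left ?_ hC.le
        apply pow_le_pow_left₀ (by positivity) (by linarith)
      have h2 : |G x| ≤ c * Real.exp (-m * |x|) := by
        have := hGb x
        rw [hG]
        simpa [hm_def] using this
      rw [Real.norm_eq_abs, abs_mul]
      calc |w (μ + T * x)| * |G x|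
          ≤ C * (1 + μ + |x|) ^ k * (c * Real.exp (-m * |x|)) := by
            apply mul_le_mul h1 h2 (abs_nonneg _) (by positivity)
        _ = C * c * ((1 + μ + |x|) ^ k * Real.exp (-m * |x|)) := by ring
        _ ≤ C * c * ((2 / m) ^ k * (k.factorial : ℝ) * Real.exp (m / 2 * (1 + μ))
              * Real.exp (-(m / 2) * |x|)) := by
            apply mul_le_mul_of_nonneg_left
              (poly_exp_bound hm k (abs_nonneg x) hμ.le) (by positivity)
        _ = A * Real.exp (-(m / 2) * |x|) := by rw [hA]; ring
    · have h1 : IntegrableOn (fun t : ℝ => A * Real.exp (-(m / 2) * t)) (Ioi (0:ℝ)) :=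
        (exp_neg_integrableOn_Ioi 0 (by positivity)).const_mul A
      exact integrable_comp_abs h1
    · refine Eventually.of_forall fun x => ?_
      have ht : Tendsto (fun T : ℝ => μ + T * x) (nhdsWithin 0 (Set.Ioi 0)) (nhds μ) := by
        have h0 : Tendsto (fun T : ℝ => μ + T * x) (nhds 0) (nhds (μ + 0 * x)) :=
          ((continuous_const.add (continuous_id.mul continuous_const)).tendsto 0)
        rw [zero_mul, add_zero] at h0
        exact h0.mono_left nhdsWithin_le_nhds
      exact ((hw.tendsto μ).comp ht).mul_const (G x)
  have hval : (∫ x : ℝ, w μ * G x) = Real.pi ^ 2 / 3 * ((1 + α) / (2 * α)) * w μ := by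
    rw [integral_const_mul, hG, integral_renyiH_exp hα]
    ring
  rw [hval] at hmain
  exact hmain.congr' (hstep.mono fun T h => h.symm)
end

section
/- Let α > 0 with α ≠ 1, T > 0, μ ∈ ℝ, and let N : ℝ → ℝ be continuously differentiable with N(E) = 0 for E ≤ 0 and |N(E)| + |N′(E)| ≤ C(1+|E|)^k for some constants C > 0, k ∈ ℕ. Define the pressure p(T) := ∫_{−∞}^{∞} N(E) · f_T(E−μ) dE. Then ∫_{−∞}^{∞} N′(E) · h_α(f_T(E−μ)) dE = (α/((α−1)·T)) · [ p(T) − p(T/α) ]. -/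
open MeasureTheory

section RenyiAux
open Real Filter Set MeasureTheory

-- poly * exp decay bound
lemma poly_exp_bound_s10 (c : ℝ) (hc : 0 < c) (k : ℕ) :
    ∃ M : ℝ, 0 < M ∧ ∀ E : ℝ, 0 ≤ E → (1 + E) ^ k * Real.exp (-(c * E)) ≤ M * Real.exp (-(c / 2 * E)) := by
  set ε : ℝ := min 1 (c / (2 * k + 2)) with hε
  have hε0 : 0 < ε := lt_min one_pos (by positivity)
  refine ⟨ε⁻¹ ^ k, by positivity, fun E hE => ?_⟩
  have h1 : 1 + E ≤ ε⁻¹ * Real.exp (ε * E) := by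
    have h2 : 1 + E ≤ ε⁻¹ * (1 + ε * E) := by
      have hεle : ε ≤ 1 := min_le_left _ _
      have : ε * (1 + E) ≤ 1 + ε * E := by nlinarith
      calc 1 + E = ε⁻¹ * (ε * (1 + E)) := by field_simp
        _ ≤ ε⁻¹ * (1 + ε * E) := by
            apply mul_le_mul_of_nonneg_left this (by positivity)
    exact h2.trans (mul_le_mul_of_nonneg_left (by linarith [Real.add_one_le_exp (ε*E)]) (by positivity))
  have h1' : (1 + E) ^ k ≤ ε⁻¹ ^ k * Real.exp (k * ε * E) := by
    calc (1 + E) ^ k ≤ (ε⁻¹ * Real.exp (ε * E)) ^ k :=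
          pow_le_pow_left₀ (by linarith) h1 k
      _ = ε⁻¹ ^ k * Real.exp (ε * E) ^ k := mul_pow _ _ _
      _ = ε⁻¹ ^ k * Real.exp (k * ε * E) := by
          rw [← Real.exp_nat_mul]; ring_nf
  have hkε : (k : ℝ) * ε ≤ c / 2 := by
    have h3 : ε ≤ c / (2 * k + 2) := min_le_right _ _
    have hk : (0:ℝ) ≤ k := Nat.cast_nonneg k
    have h5 : c / (2 * k + 2) * (2 * k + 2) = c := div_mul_cancel₀ _ (by positivity)
    nlinarith [h3, hk, hc]
  calc (1 + E) ^ k * Real.exp (-(c * E))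
      ≤ ε⁻¹ ^ k * Real.exp (k * ε * E) * Real.exp (-(c * E)) := by
        apply mul_le_mul_of_nonneg_right h1' (Real.exp_pos _).le
    _ = ε⁻¹ ^ k * Real.exp (k * ε * E - c * E) := by rw [mul_assoc, ← Real.exp_add]; ring_nf
    _ ≤ ε⁻¹ ^ k * Real.exp (-(c / 2 * E)) := by
        apply mul_le_mul_of_nonneg_left (Real.exp_le_exp.2 ?_) (by positivity)
        nlinarith [hkε, hE]

-- integrability of a continuous function supported on [0,∞) with poly×exp bound
lemma integrable_decay {φ : ℝ → ℝ} (hφ : Continuous φ) (h0 : ∀ E ≤ (0:ℝ), φ E = 0)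
    {c D : ℝ} (hc : 0 < c) (k : ℕ)
    (hbd : ∀ E : ℝ, 0 ≤ E → |φ E| ≤ D * ((1 + E) ^ k * Real.exp (-(c * E)))) :
    Integrable φ := by
  obtain ⟨M, hM, hMb⟩ := poly_exp_bound_s10 c hc k
  have hD : 0 ≤ D := by
    have h := (abs_nonneg (φ 1)).trans (hbd 1 zero_le_one)
    have hx : (0:ℝ) < (1 + 1) ^ k * Real.exp (-(c * 1)) := by positivity
    nlinarith [h, hx]
  rw [← integrableOn_univ, ← Set.Iic_union_Ioi (a := (0:ℝ)), integrableOn_union]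
  constructor
  · exact (integrableOn_congr_fun (fun x hx => h0 x hx) measurableSet_Iic).2
      (integrableOn_zero)
  · have hexp : IntegrableOn (fun E : ℝ => D * M * Real.exp (-(c/2) * E)) (Ioi 0) :=
      (exp_neg_integrableOn_Ioi 0 (by positivity)).const_mul _
    refine hexp.integrable.mono hφ.aestronglyMeasurable ?_
    filter_upwards [ae_restrict_mem measurableSet_Ioi] with E hE
    have hE0 : (0:ℝ) ≤ E := le_of_lt hE
    have := (hbd E hE0).trans (mul_le_mul_of_nonneg_left (hMb E hE0) hD)
    rw [Real.norm_eq_abs, Real.norm_eq_abs]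
    calc |φ E| ≤ D * (M * Real.exp (-(c/2 * E))) := this
      _ ≤ |D * M * Real.exp (-(c/2) * E)| := by rw [abs_of_nonneg (by positivity)]; ring_nf; rfl

-- deriv N vanishes on (-∞, 0]
lemma deriv_zero_of_zero {N : ℝ → ℝ} (hN : ContDiff ℝ 1 N) (hN0 : ∀ E ≤ (0:ℝ), N E = 0) :
    ∀ E ≤ (0:ℝ), deriv N E = 0 := by
  have hlt : ∀ E < (0:ℝ), deriv N E = 0 := by
    intro E hE
    have hev : N =ᶠ[nhds E] (fun _ => (0:ℝ)) :=
      Filter.eventually_of_mem (Iio_mem_nhds hE) (fun y hy => hN0 y (le_of_lt hy))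
    rw [hev.deriv_eq, deriv_const]
  intro E hE
  rcases lt_or_eq_of_le hE with h | h
  · exact hlt E h
  · subst h
    have hcont : ContinuousAt (deriv N) 0 := (hN.continuous_deriv le_rfl).continuousAt
    have h1 : Tendsto (deriv N) (nhdsWithin 0 (Iio 0)) (nhds (deriv N 0)) :=
      hcont.continuousWithinAt.tendsto
    have h2 : Tendsto (deriv N) (nhdsWithin 0 (Iio 0)) (nhds 0) := by
      apply Tendsto.congr' _ tendsto_const_nhds
      filter_upwards [self_mem_nhdsWithin] with x hx using (hlt x hx).symm
    exact tendsto_nhds_unique h1 h2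

lemma parts (T' μ : ℝ) (hT' : 0 < T') {N : ℝ → ℝ} (hN : ContDiff ℝ 1 N)
    (hN0 : ∀ E ≤ (0:ℝ), N E = 0) {C : ℝ} {k : ℕ} (hC : 0 < C)
    (hbd : ∀ E : ℝ, |N E| + |deriv N E| ≤ C * (1 + |E|) ^ k) :
    Integrable (fun E => N E * (1 + Real.exp ((E - μ) / T'))⁻¹) ∧
    Integrable (fun E => deriv N E * Real.log (1 + Real.exp (-((E - μ) / T')))) ∧
    ∫ E : ℝ, deriv N E * Real.log (1 + Real.exp (-((E - μ) / T')))
      = T'⁻¹ * ∫ E : ℝ, N E * (1 + Real.exp ((E - μ) / T'))⁻¹ := by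
  have hd0 := deriv_zero_of_zero hN hN0
  set g : ℝ → ℝ := fun E => Real.log (1 + Real.exp (-((E - μ) / T'))) with hg
  set f : ℝ → ℝ := fun E => (1 + Real.exp ((E - μ) / T'))⁻¹ with hf
  have hfpos : ∀ E, 0 < 1 + Real.exp ((E - μ) / T') := fun E => by positivity
  have hgpos : ∀ E, 0 < 1 + Real.exp (-((E - μ) / T')) := fun E => by positivity
  have hexp_split : ∀ E : ℝ, Real.exp (-((E - μ) / T'))
      = Real.exp (μ / T') * Real.exp (-(T'⁻¹ * E)) := by
    intro E
    rw [← Real.exp_add]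
    congr 1
    field_simp
    ring
  have hgbd : ∀ E, |g E| ≤ Real.exp (μ / T') * Real.exp (-(T'⁻¹ * E)) := by
    intro E
    rw [abs_of_nonneg (Real.log_nonneg (by nlinarith [Real.exp_pos (-((E - μ) / T'))]))]
    calc g E ≤ 1 + Real.exp (-((E - μ) / T')) - 1 :=
          Real.log_le_sub_one_of_pos (hgpos E)
      _ = Real.exp (-((E - μ) / T')) := by ring
      _ = _ := hexp_split E
  have hfbd : ∀ E, |f E| ≤ Real.exp (μ / T') * Real.exp (-(T'⁻¹ * E)) := by
    intro E
    rw [abs_of_nonneg (le_of_lt (inv_pos.2 (hfpos E)))]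
    calc f E ≤ (Real.exp ((E - μ) / T'))⁻¹ := by
          apply inv_anti₀ (Real.exp_pos _)
          nlinarith [Real.exp_pos ((E - μ) / T')]
      _ = Real.exp (-((E - μ) / T')) := by rw [← Real.exp_neg]
      _ = _ := hexp_split E
  have hNbd : ∀ E : ℝ, 0 ≤ E → |N E| ≤ C * (1 + E) ^ k := by
    intro E hE
    have := hbd E
    rw [abs_of_nonneg hE] at this
    nlinarith [abs_nonneg (deriv N E)]
  have hN'bd : ∀ E : ℝ, 0 ≤ E → |deriv N E| ≤ C * (1 + E) ^ k := by
    intro E hE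
    have := hbd E
    rw [abs_of_nonneg hE] at this
    nlinarith [abs_nonneg (N E)]
  have hfcont : Continuous f :=
    Continuous.inv₀ (by continuity) (fun x => ne_of_gt (hfpos x))
  have hgcont : Continuous g :=
    Continuous.log (by continuity) (fun x => ne_of_gt (hgpos x))
  -- Integrability of N * f
  have I2 : Integrable (fun E => N E * f E) := by
    apply integrable_decay (hN.continuous.mul hfcont)
      (fun E hE => by simp [hN0 E hE]) (inv_pos.2 hT') k
      (D := C * Real.exp (μ / T'))
    intro E hE
    rw [Pi.mul_apply, abs_mul]
    calc |N E| * |f E| ≤ (C * (1 + E) ^ k) * (Real.exp (μ / T') * Real.exp (-(T'⁻¹ * E))) :=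
          mul_le_mul (hNbd E hE) (hfbd E) (abs_nonneg _) (by positivity)
      _ = C * Real.exp (μ / T') * ((1 + E) ^ k * Real.exp (-(T'⁻¹ * E))) := by ring
  -- Integrability of N' * g
  have I1 : Integrable (fun E => deriv N E * g E) := by
    apply integrable_decay ((hN.continuous_deriv le_rfl).mul hgcont)
      (fun E hE => by simp [hd0 E hE]) (inv_pos.2 hT') k
      (D := C * Real.exp (μ / T'))
    intro E hE
    rw [Pi.mul_apply, abs_mul]
    calc |deriv N E| * |g E| ≤ (C * (1 + E) ^ k) * (Real.exp (μ / T') * Real.exp (-(T'⁻¹ * E))) :=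
          mul_le_mul (hN'bd E hE) (hgbd E) (abs_nonneg _) (by positivity)
      _ = C * Real.exp (μ / T') * ((1 + E) ^ k * Real.exp (-(T'⁻¹ * E))) := by ring
  refine ⟨I2, I1, ?_⟩
  -- derivative of g
  set gd : ℝ → ℝ := fun E => -(T'⁻¹ * f E) with hgd
  have hg' : ∀ E : ℝ, HasDerivAt g (gd E) E := by
    intro E
    have h1 : HasDerivAt (fun x : ℝ => -((x - μ) / T')) (-T'⁻¹) E := by
      simpa [one_div] using (((hasDerivAt_id E).sub_const μ).div_const T').fun_neg
    have h4 := ((h1.exp.const_add 1).log (ne_of_gt (hgpos E)))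
    convert h4 using 1
    rw [hgd, hf]
    rw [Real.exp_neg]
    have h5 := (Real.exp_pos ((E - μ) / T')).ne'
    field_simp
    ring
  have hint2 : Integrable (fun E => N E * gd E) := by
    have : (fun E => N E * gd E) = fun E => (-(T'⁻¹)) * (N E * f E) := by
      funext E; rw [hgd]; ring
    rw [this]
    exact I2.const_mul _
  set u : ℝ → ℝ := fun E => N E * g E with hu
  have hu' : ∀ E : ℝ, HasDerivAt u (deriv N E * g E + N E * gd E) E :=
    fun E => ((hN.differentiable one_ne_zero E).hasDerivAt).mul (hg' E)
  have hw_int : Integrable (fun E => deriv N E * g E + N E * gd E) := I1.add hint2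
  -- integral of the derivative over ℝ is zero
  have hIic : ∫ E in Set.Iic (0:ℝ), (deriv N E * g E + N E * gd E) = 0 :=
    setIntegral_eq_zero_of_forall_eq_zero (fun x hx => by
      simp [hN0 x hx, hd0 x hx])
  have htend : Tendsto u atTop (nhds 0) := by
    obtain ⟨M, hM, hMb⟩ := poly_exp_bound_s10 T'⁻¹ (inv_pos.2 hT') k
    apply tendsto_zero_iff_norm_tendsto_zero.mpr
    apply squeeze_zero' (Filter.Eventually.of_forall (fun E => norm_nonneg _))
      (g := fun E => C * Real.exp (μ / T') * M * Real.exp (-(T'⁻¹/2 * E)))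
    · filter_upwards [Filter.eventually_ge_atTop (0:ℝ)] with E hE
      rw [Real.norm_eq_abs, hu, abs_mul]
      calc |N E| * |g E| ≤ (C * (1 + E) ^ k) * (Real.exp (μ / T') * Real.exp (-(T'⁻¹ * E))) :=
            mul_le_mul (hNbd E hE) (hgbd E) (abs_nonneg _) (by positivity)
        _ = C * Real.exp (μ / T') * ((1 + E) ^ k * Real.exp (-(T'⁻¹ * E))) := by ring
        _ ≤ C * Real.exp (μ / T') * (M * Real.exp (-(T'⁻¹/2 * E))) := by
            apply mul_le_mul_of_nonneg_left (hMb E hE) (by positivity)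
        _ = C * Real.exp (μ / T') * M * Real.exp (-(T'⁻¹/2 * E)) := by ring
    · have h1 : Tendsto (fun E : ℝ => -(T'⁻¹/2 * E)) atTop atBot := by
        apply Filter.tendsto_neg_atBot_iff.2
        exact Filter.Tendsto.const_mul_atTop (by positivity) tendsto_id
      have h2 : Tendsto (fun E : ℝ => Real.exp (-(T'⁻¹/2 * E))) atTop (nhds 0) :=
        Real.tendsto_exp_atBot.comp h1
      simpa using h2.const_mul (C * Real.exp (μ / T') * M)
  have hIoi : ∫ E in Set.Ioi (0:ℝ), (deriv N E * g E + N E * gd E) = 0 := by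
    have := integral_Ioi_of_hasDerivAt_of_tendsto' (a := 0)
      (fun x _ => hu' x) hw_int.integrableOn htend
    rw [this, hu]
    simp [hN0 0 le_rfl]
  have htotal : ∫ E : ℝ, (deriv N E * g E + N E * gd E) = 0 := by
    rw [← integral_add_compl (measurableSet_Iic (a := (0:ℝ))) hw_int, compl_Iic, hIic, hIoi]
    ring
  rw [integral_add I1 hint2] at htotal
  have hsecond : ∫ E : ℝ, N E * gd E = -(T'⁻¹) * ∫ E : ℝ, N E * f E := by
    rw [← integral_const_mul]
    congr 1
    funext E
    rw [hgd]; ring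
  rw [hsecond] at htotal
  linarith

lemma pointwise_h (α T μ E : ℝ) (hα : 0 < α) (hT : 0 < T) :
    Real.log (((1 + Real.exp ((E - μ) / T))⁻¹) ^ α + (1 - (1 + Real.exp ((E - μ) / T))⁻¹) ^ α)
    = -α * Real.log (1 + Real.exp (-((E - μ) / T)))
      + Real.log (1 + Real.exp (-((E - μ) / (T / α)))) := by
  set u : ℝ := (E - μ) / T with hu
  have hA : 0 < Real.exp u := Real.exp_pos u
  have h1A : 0 < 1 + Real.exp u := by positivity
  have key : ∀ v : ℝ, Real.log (1 + Real.exp v) = v + Real.log (1 + Real.exp (-v)) := by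
    intro v
    have h : (1:ℝ) + Real.exp v = Real.exp v * (1 + Real.exp (-v)) := by
      rw [mul_add, mul_one, ← Real.exp_add]
      simp [add_comm]
    rw [h, Real.log_mul (Real.exp_ne_zero v) (by positivity), Real.log_exp]
  have h1 : 1 - (1 + Real.exp u)⁻¹ = Real.exp u * (1 + Real.exp u)⁻¹ := by
    field_simp
    ring
  have hsum : ((1 + Real.exp u)⁻¹) ^ α + (1 - (1 + Real.exp u)⁻¹) ^ α
      = ((1 + Real.exp u) ^ α)⁻¹ * (1 + Real.exp (α * u)) := by
    rw [h1, Real.mul_rpow hA.le (by positivity), Real.inv_rpow h1A.le,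
      ← Real.exp_mul, mul_comm u α]
    ring
  have hTu : (E - μ) / (T / α) = α * u := by
    rw [hu]
    field_simp
  rw [hsum, Real.log_mul (by positivity) (by positivity), Real.log_inv,
    Real.log_rpow h1A, key u, key (α * u), hTu]
  ring

end RenyiAux

open Real Filter Set in

/-- The thermal `α`-Rényi entropy density as a difference of pressures: for `α > 0`,
`α ≠ 1`, `T > 0`, `μ ∈ ℝ` and a `C¹` integrated density of states `N` vanishing on
`(-∞,0]` and of polynomial growth (together with its derivative),
`∫ N′(E) h_α(f_T(E-μ)) dE = (α/((α-1)T)) (p(T) - p(T/α))`, where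
`p(T) = ∫ N(E) f_T(E-μ) dE` and `f_T(E) = (1+exp(E/T))⁻¹`. -/
theorem renyi_entropy_density_eq_pressure_difference (α T μ : ℝ)
    (hα : 0 < α) (hα1 : α ≠ 1) (hT : 0 < T) (N : ℝ → ℝ)
    (hN : ContDiff ℝ 1 N) (hN0 : ∀ E ≤ (0 : ℝ), N E = 0)
    (C : ℝ) (k : ℕ) (hC : 0 < C)
    (hbd : ∀ E : ℝ, |N E| + |deriv N E| ≤ C * (1 + |E|) ^ k) :
    ∫ E : ℝ, deriv N E *
        ((1 - α)⁻¹ * Real.log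
          (((1 + Real.exp ((E - μ) / T))⁻¹) ^ α + (1 - (1 + Real.exp ((E - μ) / T))⁻¹) ^ α))
      = (α / ((α - 1) * T)) *
        ((∫ E : ℝ, N E * (1 + Real.exp ((E - μ) / T))⁻¹)
          - ∫ E : ℝ, N E * (1 + Real.exp ((E - μ) / (T / α)))⁻¹) := by
  have hTα : 0 < T / α := by positivity
  obtain ⟨I2T, I1T, hparT⟩ := parts T μ hT hN hN0 hC hbd
  obtain ⟨I2a, I1a, hpara⟩ := parts (T / α) μ hTα hN hN0 hC hbd
  calc ∫ E : ℝ, deriv N E *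
        ((1 - α)⁻¹ * Real.log
          (((1 + Real.exp ((E - μ) / T))⁻¹) ^ α + (1 - (1 + Real.exp ((E - μ) / T))⁻¹) ^ α))
      = ∫ E : ℝ, (1 - α)⁻¹ *
          ((-α) * (deriv N E * Real.log (1 + Real.exp (-((E - μ) / T))))
            + deriv N E * Real.log (1 + Real.exp (-((E - μ) / (T / α))))) := by
        congr 1
        funext E
        rw [pointwise_h α T μ E hα hT]
        ring
    _ = (1 - α)⁻¹ *
          (((-α) * ∫ E : ℝ, deriv N E * Real.log (1 + Real.exp (-((E - μ) / T))))
            + ∫ E : ℝ, deriv N E * Real.log (1 + Real.exp (-((E - μ) / (T / α))))) := by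
        rw [integral_const_mul, integral_add (I1T.const_mul _) I1a, integral_const_mul]
    _ = (1 - α)⁻¹ *
          (((-α) * (T⁻¹ * ∫ E : ℝ, N E * (1 + Real.exp ((E - μ) / T))⁻¹))
            + (T / α)⁻¹ * ∫ E : ℝ, N E * (1 + Real.exp ((E - μ) / (T / α)))⁻¹) := by
        rw [hparT, hpara]
    _ = (α / ((α - 1) * T)) *
        ((∫ E : ℝ, N E * (1 + Real.exp ((E - μ) / T))⁻¹)
          - ∫ E : ℝ, N E * (1 + Real.exp ((E - μ) / (T / α)))⁻¹) := by
        have h1 : (1:ℝ) - α ≠ 0 := sub_ne_zero.mpr (Ne.symm hα1)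
        have h2 : α - 1 ≠ 0 := sub_ne_zero.mpr hα1
        field_simp
        ring
end

section
/- Let μ ∈ ℝ and let N : ℝ → ℝ be continuously differentiable with N(E) = 0 for E ≤ 0 and |N(E)| + |N′(E)| ≤ C(1+|E|)^k for some constants C > 0, k ∈ ℕ. Then the pressure p(T) := ∫_{−∞}^{∞} N(E) · f_T(E−μ) dE is a differentiable function of T on (0,∞), and its derivative equals the thermal entropy density: p′(T) = ∫_{−∞}^{∞} N′(E) · h_1(f_T(E−μ)) dE. -/
open MeasureTheory
open Real Filter Set

section helpers

lemma fermi_pos (x : ℝ) : 0 < (1 + Real.exp x)⁻¹ := by positivity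

lemma fermi_lt_one (x : ℝ) : (1 + Real.exp x)⁻¹ < 1 := by
  rw [inv_lt_one_iff₀]; right; linarith [Real.exp_pos x]

lemma fermi_le_exp_neg (x : ℝ) : (1 + Real.exp x)⁻¹ ≤ Real.exp (-x) := by
  rw [Real.exp_neg]
  exact inv_anti₀ (Real.exp_pos x) (by linarith)

lemma one_sub_fermi (x : ℝ) : 1 - (1 + Real.exp x)⁻¹ = Real.exp x * (1 + Real.exp x)⁻¹ := by
  have h : (1 : ℝ) + Real.exp x ≠ 0 := by positivity
  field_simp
  ring

lemma one_sub_fermi_pos (x : ℝ) : 0 < 1 - (1 + Real.exp x)⁻¹ := by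
  rw [one_sub_fermi]; positivity

lemma one_sub_fermi_le_exp (x : ℝ) : 1 - (1 + Real.exp x)⁻¹ ≤ Real.exp x := by
  rw [one_sub_fermi]
  calc Real.exp x * (1 + Real.exp x)⁻¹ ≤ Real.exp x * 1 := by
        apply mul_le_mul_of_nonneg_left _ (Real.exp_pos x).le
        rw [inv_le_one_iff₀]; right; linarith [Real.exp_pos x]
    _ = Real.exp x := mul_one _

lemma exp_mul_sq_inv_le (x : ℝ) :
    Real.exp x * ((1 + Real.exp x)⁻¹) ^ 2 ≤ Real.exp (-|x|) := by
  rcases le_or_gt 0 x with hx | hx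
  · rw [abs_of_nonneg hx]
    have h1 : ((1 + Real.exp x)⁻¹) ^ 2 ≤ ((Real.exp x)⁻¹) ^ 2 := by
      apply pow_le_pow_left₀ (by positivity)
      exact inv_anti₀ (Real.exp_pos x) (by linarith)
    calc Real.exp x * ((1 + Real.exp x)⁻¹) ^ 2 ≤ Real.exp x * ((Real.exp x)⁻¹) ^ 2 :=
          mul_le_mul_of_nonneg_left h1 (Real.exp_pos x).le
      _ = (Real.exp x)⁻¹ := by rw [sq]; field_simp
      _ = Real.exp (-x) := (Real.exp_neg x).symm
  · rw [abs_of_neg hx, neg_neg]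
    calc Real.exp x * ((1 + Real.exp x)⁻¹) ^ 2 ≤ Real.exp x * 1 := by
          apply mul_le_mul_of_nonneg_left _ (Real.exp_pos x).le
          have : (1 + Real.exp x)⁻¹ ≤ 1 := by
            rw [inv_le_one_iff₀]; right; linarith [Real.exp_pos x]
          calc ((1 + Real.exp x)⁻¹) ^ 2 ≤ 1 ^ 2 := pow_le_pow_left₀ (by positivity) this 2
            _ = 1 := one_pow 2
      _ = Real.exp x := mul_one _

lemma one_add_pow_le_exp (m : ℕ) {b : ℝ} (hb : 0 < b) {u : ℝ} (hu : 0 ≤ u) :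
    (1 + u) ^ m ≤ ((m + 1) / b) ^ (m + 1) * Real.exp b * Real.exp (b * u) := by
  have hm1 : (0 : ℝ) < m + 1 := by positivity
  have key : 1 + u ≤ (m + 1) / b * Real.exp (b / (m + 1) * (1 + u)) := by
    have h1 : b / (m + 1) * (1 + u) ≤ Real.exp (b / (m + 1) * (1 + u)) :=
      le_trans (by linarith) (Real.add_one_le_exp _)
    calc 1 + u = (m + 1) / b * (b / (m + 1) * (1 + u)) := by field_simp
      _ ≤ (m + 1) / b * Real.exp (b / (m + 1) * (1 + u)) := by
          apply mul_le_mul_of_nonneg_left h1 (by positivity)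
  calc (1 + u) ^ m ≤ (1 + u) ^ (m + 1) :=
        pow_le_pow_right₀ (by linarith) (Nat.le_succ m)
    _ ≤ ((m + 1) / b * Real.exp (b / (m + 1) * (1 + u))) ^ (m + 1) :=
        pow_le_pow_left₀ (by linarith) key _
    _ = ((m + 1) / b) ^ (m + 1) * Real.exp b * Real.exp (b * u) := by
        rw [mul_pow, ← Real.exp_nat_mul, mul_assoc, ← Real.exp_add]
        congr 2
        field_simp
        ring
        push_cast
        ring

lemma integrable_exp_neg_abs' {a : ℝ} (ha : 0 < a) :
    Integrable (fun x : ℝ => Real.exp (-(a * |x|))) := by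
  have h1 : IntegrableOn (fun x : ℝ => Real.exp (-(a * |x|))) (Ioi 0) := by
    apply (exp_neg_integrableOn_Ioi 0 ha).congr_fun _ measurableSet_Ioi
    intro x hx
    simp [abs_of_pos (mem_Ioi.mp hx)]
  have h2 : IntegrableOn (fun x : ℝ => Real.exp (-(a * |x|))) (Iic 0) := by
    rw [← Measure.map_neg_eq_self (volume : Measure ℝ)]
    have m : MeasurableEmbedding fun x : ℝ => -x :=
      (Homeomorph.neg ℝ).measurableEmbedding
    rw [m.integrableOn_map_iff]
    simp only [Function.comp_def, abs_neg, neg_preimage, neg_Iic, neg_zero]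
    exact (integrableOn_Ici_iff_integrableOn_Ioi (by simp)).mpr h1
  rw [← integrableOn_univ, ← Iic_union_Ioi (a := (0:ℝ))]
  exact h2.union h1

lemma integrable_poly_exp (m : ℕ) {a : ℝ} (c : ℝ) (ha : 0 < a) :
    Integrable (fun x : ℝ => (1 + |x - c|) ^ m * Real.exp (-(a * |x - c|))) := by
  have h0 : Integrable (fun x : ℝ => (1 + |x|) ^ m * Real.exp (-(a * |x|))) := by
    set B : ℝ := ((m + 1) / (a / 2)) ^ (m + 1) * Real.exp (a / 2) with hB
    have hint : Integrable (fun x : ℝ => B * Real.exp (-(a / 2 * |x|))) :=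
      (integrable_exp_neg_abs' (by linarith)).const_mul B
    apply hint.mono'
    · apply Continuous.aestronglyMeasurable
      have : Continuous fun x : ℝ => |x| := continuous_abs
      fun_prop
    · filter_upwards with x
      have hb : (1 + |x|) ^ m ≤ B * Real.exp (a / 2 * |x|) := by
        rw [hB]
        exact one_add_pow_le_exp m (b := a / 2) (by linarith) (abs_nonneg x)
      rw [Real.norm_eq_abs, abs_of_nonneg (by positivity)]
      calc (1 + |x|) ^ m * Real.exp (-(a * |x|))
          ≤ (B * Real.exp (a / 2 * |x|)) * Real.exp (-(a * |x|)) := by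
            apply mul_le_mul_of_nonneg_right hb (Real.exp_pos _).le
        _ = B * Real.exp (-(a / 2 * |x|)) := by
            rw [mul_assoc, ← Real.exp_add]; congr 2; ring
  simpa using h0.comp_sub_right c

lemma one_add_abs_pow_le (k : ℕ) (c x : ℝ) :
    (1 + |x|) ^ k ≤ (1 + |c|) ^ k * (1 + |x - c|) ^ k := by
  rw [← mul_pow]
  apply pow_le_pow_left₀ (by positivity)
  have h2 : |x| ≤ |c| + |x - c| := by
    nlinarith [abs_sub_abs_le_abs_sub x c, abs_nonneg (x - c), abs_nonneg c]
  nlinarith [abs_nonneg c, abs_nonneg (x - c)]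

lemma neg_log_le_two_div_sqrt {t : ℝ} (ht : 0 < t) : -Real.log t ≤ 2 / Real.sqrt t := by
  have hs : 0 < Real.sqrt t := Real.sqrt_pos.mpr ht
  have h1 : Real.log (Real.sqrt t)⁻¹ ≤ (Real.sqrt t)⁻¹ - 1 :=
    Real.log_le_sub_one_of_pos (by positivity)
  rw [Real.log_inv, Real.log_sqrt ht.le] at h1
  rw [div_eq_mul_inv]
  linarith [inv_nonneg.mpr hs.le]

lemma h1_nonneg {t : ℝ} (h0 : 0 < t) (h1 : t < 1) :
    0 ≤ -(t * Real.log t) - (1 - t) * Real.log (1 - t) := by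
  have a1 : Real.log t ≤ 0 := Real.log_nonpos h0.le h1.le
  have a2 : Real.log (1 - t) ≤ 0 := Real.log_nonpos (by linarith) (by linarith)
  nlinarith

lemma h1_le_three_sqrt {t : ℝ} (h0 : 0 < t) (h1 : t < 1) :
    -(t * Real.log t) - (1 - t) * Real.log (1 - t) ≤ 3 * Real.sqrt t := by
  have hs : 0 < Real.sqrt t := Real.sqrt_pos.mpr h0
  have hsq : Real.sqrt t * Real.sqrt t = t := Real.mul_self_sqrt h0.le
  have b1 : -(t * Real.log t) ≤ 2 * Real.sqrt t := by
    have h2 : -Real.log t ≤ 2 / Real.sqrt t := neg_log_le_two_div_sqrt h0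
    calc -(t * Real.log t) = t * (-Real.log t) := by ring
      _ ≤ t * (2 / Real.sqrt t) := mul_le_mul_of_nonneg_left h2 h0.le
      _ = 2 * Real.sqrt t := by
          rw [div_eq_mul_inv]
          field_simp
          nlinarith
  have b2 : -((1 - t) * Real.log (1 - t)) ≤ Real.sqrt t := by
    have hp : (0:ℝ) < 1 - t := by linarith
    have h3 : Real.log (1 - t)⁻¹ ≤ (1 - t)⁻¹ - 1 := Real.log_le_sub_one_of_pos (by positivity)
    rw [Real.log_inv] at h3
    have h4 : -((1 - t) * Real.log (1 - t)) ≤ (1 - t) * ((1 - t)⁻¹ - 1) := by nlinarith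
    have h5 : (1 - t) * ((1 - t)⁻¹ - 1) = t := by field_simp; ring
    have h6 : t ≤ Real.sqrt t := by
      nlinarith [Real.sqrt_le_sqrt h1.le, Real.sqrt_one, hsq]
    linarith
  linarith

lemma entropy_nonneg (x : ℝ) :
    0 ≤ -((1 + Real.exp x)⁻¹ * Real.log (1 + Real.exp x)⁻¹)
      - (1 - (1 + Real.exp x)⁻¹) * Real.log (1 - (1 + Real.exp x)⁻¹) :=
  h1_nonneg (fermi_pos x) (fermi_lt_one x)

lemma entropy_le (x : ℝ) :
    -((1 + Real.exp x)⁻¹ * Real.log (1 + Real.exp x)⁻¹)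
      - (1 - (1 + Real.exp x)⁻¹) * Real.log (1 - (1 + Real.exp x)⁻¹)
    ≤ 3 * Real.exp (-|x| / 2) := by
  set f := (1 + Real.exp x)⁻¹ with hf
  have h0 : 0 < f := fermi_pos x
  have h1 : f < 1 := fermi_lt_one x
  rcases le_or_gt 0 x with hx | hx
  · have := h1_le_three_sqrt h0 h1
    have h2 : Real.sqrt f ≤ Real.exp (-x / 2) := by
      rw [Real.exp_half]
      exact Real.sqrt_le_sqrt (fermi_le_exp_neg x)
    rw [abs_of_nonneg hx]
    nlinarith
  · have := h1_le_three_sqrt (t := 1 - f) (by linarith) (by linarith)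
    rw [sub_sub_cancel] at this
    have h2 : Real.sqrt (1 - f) ≤ Real.exp (x / 2) := by
      rw [Real.exp_half]
      exact Real.sqrt_le_sqrt (one_sub_fermi_le_exp x)
    rw [abs_of_neg hx, neg_neg]
    nlinarith

lemma hasDerivAt_fermi_S (y S : ℝ) (hS : S ≠ 0) :
    HasDerivAt (fun S : ℝ => (1 + Real.exp (y / S))⁻¹)
      (y / S ^ 2 * (Real.exp (y / S) * ((1 + Real.exp (y / S))⁻¹) ^ 2)) S := by
  have h1 : HasDerivAt (fun S : ℝ => y / S) (-(y / S ^ 2)) S := by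
    simpa [div_eq_mul_inv, neg_mul, mul_comm] using (hasDerivAt_inv hS).const_mul y
  have h2 : HasDerivAt (fun S : ℝ => 1 + Real.exp (y / S))
      (Real.exp (y / S) * -(y / S ^ 2)) S := (h1.exp).const_add 1
  have h3 : (1 + Real.exp (y / S)) ≠ 0 := by positivity
  have h4 : HasDerivAt (fun S : ℝ => (1 + Real.exp (y / S))⁻¹)
      (-(Real.exp (y / S) * -(y / S ^ 2)) / (1 + Real.exp (y / S)) ^ 2) S := h2.inv h3
  convert h4 using 1
  field_simp

lemma hasDerivAt_entropy (μ T E : ℝ) (hT : T ≠ 0) :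
    HasDerivAt (fun E : ℝ =>
        -((1 + Real.exp ((E - μ) / T))⁻¹ * Real.log (1 + Real.exp ((E - μ) / T))⁻¹)
          - (1 - (1 + Real.exp ((E - μ) / T))⁻¹)
            * Real.log (1 - (1 + Real.exp ((E - μ) / T))⁻¹))
      (-((E - μ) / T ^ 2 * (Real.exp ((E - μ) / T)
          * ((1 + Real.exp ((E - μ) / T))⁻¹) ^ 2))) E := by
  set w := Real.exp ((E - μ) / T) with hw
  have hwpos : 0 < w := Real.exp_pos _
  have hfne : (1 + w)⁻¹ ≠ 0 := by positivity
  have h1fpos : (0:ℝ) < 1 - (1 + w)⁻¹ := one_sub_fermi_pos _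
  have hx : HasDerivAt (fun E : ℝ => (E - μ) / T) (1 / T) E := by
    simpa using ((hasDerivAt_id E).sub_const μ).div_const T
  have hwd : HasDerivAt (fun E : ℝ => Real.exp ((E - μ) / T)) (w * (1 / T)) E := hx.exp
  have hfd : HasDerivAt (fun E : ℝ => (1 + Real.exp ((E - μ) / T))⁻¹)
      (-(w * (1 / T)) / (1 + w) ^ 2) E := (hwd.const_add 1).inv (by positivity)
  have h1fd : HasDerivAt (fun E : ℝ => 1 - (1 + Real.exp ((E - μ) / T))⁻¹)
      (-(-(w * (1 / T)) / (1 + w) ^ 2)) E := hfd.const_sub 1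
  have hlogf := hfd.log hfne
  have hlog1f := h1fd.log h1fpos.ne'
  have total := ((hfd.mul hlogf).neg).sub (h1fd.mul hlog1f)
  refine total.congr_deriv (Eq.symm ?_)
  have hkey : Real.log (1 - (1 + w)⁻¹) = (E - μ) / T + Real.log (1 + w)⁻¹ := by
    rw [one_sub_fermi, hw, Real.log_mul (ne_of_gt hwpos) hfne, Real.log_exp]
  rw [hkey]
  field_simp
  ring

end helpers

/-- The derivative of the pressure is the thermal entropy density: for `μ ∈ ℝ` and a
`C¹` integrated density of states `N` vanishing on `(-∞,0]` and of polynomial growth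
(together with its derivative), the pressure `p(T) = ∫ N(E) f_T(E-μ) dE` is
differentiable on `(0,∞)` with `p′(T) = ∫ N′(E) h_1(f_T(E-μ)) dE`, where
`f_T(E) = (1+exp(E/T))⁻¹` and `h_1(t) = -t ln t - (1-t) ln(1-t)`. -/
theorem pressure_hasDerivAt_entropy_density (μ : ℝ) (N : ℝ → ℝ)
    (hN : ContDiff ℝ 1 N) (hN0 : ∀ E ≤ (0 : ℝ), N E = 0)
    (C : ℝ) (k : ℕ) (hC : 0 < C)
    (hbd : ∀ E : ℝ, |N E| + |deriv N E| ≤ C * (1 + |E|) ^ k) :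
    ∀ T : ℝ, 0 < T →
      HasDerivAt (fun S : ℝ => ∫ E : ℝ, N E * (1 + Real.exp ((E - μ) / S))⁻¹)
        (∫ E : ℝ, deriv N E *
          (-((1 + Real.exp ((E - μ) / T))⁻¹ * Real.log ((1 + Real.exp ((E - μ) / T))⁻¹))
            - (1 - (1 + Real.exp ((E - μ) / T))⁻¹)
              * Real.log (1 - (1 + Real.exp ((E - μ) / T))⁻¹))) T := by
  intro T hT
  have hNc : Continuous N := hN.continuous
  have hN'c : Continuous (deriv N) := hN.continuous_deriv le_rfl
  have hNb : ∀ E, |N E| ≤ C * (1 + |E|) ^ k :=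
    fun E => le_trans (le_add_of_nonneg_right (abs_nonneg _)) (hbd E)
  have hN'b : ∀ E, |deriv N E| ≤ C * (1 + |E|) ^ k :=
    fun E => le_trans (le_add_of_nonneg_left (abs_nonneg _)) (hbd E)
  -- continuity of the fermi factor in E for any S
  have hfc : ∀ S : ℝ, Continuous fun E : ℝ => (1 + Real.exp ((E - μ) / S))⁻¹ := by
    intro S
    apply Continuous.inv₀
    · fun_prop
    · intro x; positivity
  -- the entropy density function
  set H : ℝ → ℝ := fun E =>
    -((1 + Real.exp ((E - μ) / T))⁻¹ * Real.log ((1 + Real.exp ((E - μ) / T))⁻¹))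
      - (1 - (1 + Real.exp ((E - μ) / T))⁻¹)
        * Real.log (1 - (1 + Real.exp ((E - μ) / T))⁻¹) with hH
  have hH0 : ∀ E, 0 ≤ H E := fun E => entropy_nonneg _
  have hHle : ∀ E, H E ≤ 3 * Real.exp (-(1 / (2 * T) * |E - μ|)) := by
    intro E
    have h := entropy_le ((E - μ) / T)
    have habs : |(E - μ) / T| = |E - μ| / T := by
      rw [abs_div, abs_of_pos hT]
    rw [habs] at h
    have : -(|E - μ| / T) / 2 = -(1 / (2 * T) * |E - μ|) := by ring
    rwa [this] at h
  have hHc : Continuous H := by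
    rw [hH]
    have h1 : Continuous fun E : ℝ => Real.log ((1 + Real.exp ((E - μ) / T))⁻¹) :=
      (hfc T).log fun x => (fermi_pos _).ne'
    have h2 : Continuous fun E : ℝ => Real.log (1 - (1 + Real.exp ((E - μ) / T))⁻¹) :=
      (continuous_const.sub (hfc T)).log fun x => (one_sub_fermi_pos _).ne'
    exact (((hfc T).mul h1).neg).sub ((continuous_const.sub (hfc T)).mul h2)
  -- the T-derivative integrand
  set D : ℝ → ℝ := fun E => (E - μ) / T ^ 2
      * (Real.exp ((E - μ) / T) * ((1 + Real.exp ((E - μ) / T))⁻¹) ^ 2) with hD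
  have hDc : Continuous D := by
    rw [hD]
    have : Continuous fun E : ℝ => Real.exp ((E - μ) / T) := by fun_prop
    exact (continuous_id.sub continuous_const).div_const _ |>.mul
      (this.mul ((hfc T).pow 2))
  -- step 1: differentiate under the integral sign
  have hε : (0:ℝ) < T / 2 := by linarith
  set bound : ℝ → ℝ := fun E => (4 * C * (1 + |μ|) ^ k / T ^ 2)
      * ((1 + |E - μ|) ^ (k + 1) * Real.exp (-(2 / (3 * T) * |E - μ|))) with hbound
  have bound_int : Integrable bound :=
    (integrable_poly_exp (k + 1) μ (by positivity)).const_mul _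
  have h_bound : ∀ E : ℝ, ∀ S ∈ Metric.ball T (T / 2),
      ‖N E * ((E - μ) / S ^ 2
        * (Real.exp ((E - μ) / S) * ((1 + Real.exp ((E - μ) / S))⁻¹) ^ 2))‖ ≤ bound E := by
    intro E S hS
    rw [Metric.mem_ball, Real.dist_eq] at hS
    have hS1 : T / 2 < S := by cases abs_lt.mp hS; linarith
    have hS2 : S < 3 * T / 2 := by cases abs_lt.mp hS; linarith
    have hSpos : 0 < S := by linarith
    have e1 : Real.exp ((E - μ) / S) * ((1 + Real.exp ((E - μ) / S))⁻¹) ^ 2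
        ≤ Real.exp (-(2 / (3 * T) * |E - μ|)) := by
      refine le_trans (exp_mul_sq_inv_le _) (Real.exp_le_exp.mpr ?_)
      rw [abs_div, abs_of_pos hSpos, neg_le_neg_iff]
      have h3 : 2 / (3 * T) ≤ S⁻¹ := by
        have h := inv_anti₀ hSpos hS2.le
        rwa [inv_div] at h
      calc 2 / (3 * T) * |E - μ| = |E - μ| * (2 / (3 * T)) := mul_comm _ _
        _ ≤ |E - μ| * S⁻¹ := mul_le_mul_of_nonneg_left h3 (abs_nonneg _)
        _ = |E - μ| / S := (div_eq_mul_inv _ _).symm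
    have e3 : |E - μ| / S ^ 2 ≤ 4 / T ^ 2 * (1 + |E - μ|) := by
      have hs2 : (T / 2) ^ 2 ≤ S ^ 2 := by nlinarith
      have h4 : (S ^ 2)⁻¹ ≤ 4 / T ^ 2 := by
        have : ((T / 2) ^ 2)⁻¹ = 4 / T ^ 2 := by
          rw [div_pow]; rw [inv_div]; norm_num
        rw [← this]
        exact inv_anti₀ (by positivity) hs2
      calc |E - μ| / S ^ 2 = |E - μ| * (S ^ 2)⁻¹ := div_eq_mul_inv _ _
        _ ≤ (1 + |E - μ|) * (4 / T ^ 2) := by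
            apply mul_le_mul (by linarith [abs_nonneg (E - μ)]) h4 (by positivity)
              (by positivity)
        _ = 4 / T ^ 2 * (1 + |E - μ|) := mul_comm _ _
    have hwpos : (0:ℝ) < Real.exp ((E - μ) / S) * ((1 + Real.exp ((E - μ) / S))⁻¹) ^ 2 := by
      positivity
    calc ‖N E * ((E - μ) / S ^ 2
          * (Real.exp ((E - μ) / S) * ((1 + Real.exp ((E - μ) / S))⁻¹) ^ 2))‖
        = |N E| * (|E - μ| / S ^ 2
          * (Real.exp ((E - μ) / S) * ((1 + Real.exp ((E - μ) / S))⁻¹) ^ 2)) := by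
          rw [Real.norm_eq_abs, abs_mul, abs_mul, abs_div, abs_of_nonneg (by positivity :
            (0:ℝ) ≤ S ^ 2), abs_of_pos hwpos]
      _ ≤ (C * (1 + |E|) ^ k) * ((4 / T ^ 2 * (1 + |E - μ|))
            * Real.exp (-(2 / (3 * T) * |E - μ|))) := by
          apply mul_le_mul (hNb E) _ (by positivity) (by positivity)
          exact mul_le_mul e3 e1 hwpos.le (by positivity)
      _ ≤ (C * ((1 + |μ|) ^ k * (1 + |E - μ|) ^ k)) * ((4 / T ^ 2 * (1 + |E - μ|))
            * Real.exp (-(2 / (3 * T) * |E - μ|))) := by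
          apply mul_le_mul_of_nonneg_right _ (by positivity)
          exact mul_le_mul_of_nonneg_left (one_add_abs_pow_le k μ E) hC.le
      _ = bound E := by
          rw [hbound, pow_succ]
          ring
    -- end calc
  -- integrability of F T
  have hInt1 : Integrable (fun E : ℝ => N E * (1 + Real.exp ((E - μ) / T))⁻¹) := by
    apply ((integrable_poly_exp k μ (a := 1 / T) (by positivity)).const_mul
      (C * (1 + |μ|) ^ k * Real.exp (|μ| / T))).mono'
    · exact (hNc.mul (hfc T)).aestronglyMeasurable
    · filter_upwards with E
      rcases le_or_gt E 0 with hE | hE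
      · rw [Real.norm_eq_abs, hN0 E hE, zero_mul, abs_zero]
        positivity
      · have hfb : (1 + Real.exp ((E - μ) / T))⁻¹
            ≤ Real.exp (|μ| / T) * Real.exp (-(1 / T * |E - μ|)) := by
          rw [← Real.exp_add]
          rcases le_or_gt μ E with hEμ | hEμ
          · refine le_trans (fermi_le_exp_neg _) (Real.exp_le_exp.mpr ?_)
            rw [abs_of_nonneg (by linarith : (0:ℝ) ≤ E - μ)]
            have h0 : 0 ≤ |μ| / T := by positivity
            have hxy : (E - μ) / T = 1 / T * (E - μ) := by ring
            rw [hxy]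
            linarith
          · have h1 : (1 + Real.exp ((E - μ) / T))⁻¹ ≤ 1 := (fermi_lt_one _).le
            refine le_trans h1 (Real.one_le_exp ?_)
            have : |E - μ| ≤ |μ| := by
              rw [abs_of_neg (by linarith : E - μ < 0)]
              rw [abs_of_pos (by linarith : (0:ℝ) < μ)]
              linarith
            have h2 : 1 / T * |E - μ| ≤ |μ| / T := by
              rw [div_eq_mul_inv, div_eq_mul_inv, mul_comm |μ| T⁻¹, one_mul]
              exact mul_le_mul_of_nonneg_left this (by positivity)
            linarith
        rw [Real.norm_eq_abs, abs_mul, abs_of_pos (fermi_pos _)]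
        calc |N E| * (1 + Real.exp ((E - μ) / T))⁻¹
            ≤ (C * (1 + |E|) ^ k) * (Real.exp (|μ| / T) * Real.exp (-(1 / T * |E - μ|))) :=
              mul_le_mul (hNb E) hfb (fermi_pos _).le (by positivity)
          _ ≤ (C * ((1 + |μ|) ^ k * (1 + |E - μ|) ^ k))
              * (Real.exp (|μ| / T) * Real.exp (-(1 / T * |E - μ|))) := by
              apply mul_le_mul_of_nonneg_right _ (by positivity)
              exact mul_le_mul_of_nonneg_left (one_add_abs_pow_le k μ E) hC.le
          _ = C * (1 + |μ|) ^ k * Real.exp (|μ| / T)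
              * ((1 + |E - μ|) ^ k * Real.exp (-(1 / T * |E - μ|))) := by ring
  -- the dominated-convergence differentiation
  obtain ⟨hint, hder⟩ := hasDerivAt_integral_of_dominated_loc_of_deriv_le
    (F := fun S E => N E * (1 + Real.exp ((E - μ) / S))⁻¹)
    (F' := fun S E => N E * ((E - μ) / S ^ 2
      * (Real.exp ((E - μ) / S) * ((1 + Real.exp ((E - μ) / S))⁻¹) ^ 2)))
    (x₀ := T) (bound := bound) (Metric.ball_mem_nhds T hε)
    (Eventually.of_forall fun S => (hNc.mul (hfc S)).aestronglyMeasurable)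
    hInt1
    ((hNc.mul hDc).aestronglyMeasurable)
    (ae_of_all _ h_bound)
    bound_int
    (ae_of_all _ fun E S hS => by
      have hSpos : 0 < S := by
        rw [Metric.mem_ball, Real.dist_eq] at hS
        cases abs_lt.mp hS; linarith
      exact (hasDerivAt_fermi_S (E - μ) S hSpos.ne').const_mul (N E))
  -- step 2: integration by parts
  have hIntu'v : Integrable (fun E : ℝ => deriv N E * H E) := by
    apply ((integrable_poly_exp k μ (a := 1 / (2 * T)) (by positivity)).const_mul
      (3 * C * (1 + |μ|) ^ k)).mono' (hN'c.mul hHc).aestronglyMeasurable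
    filter_upwards with E
    rw [Real.norm_eq_abs, Pi.mul_apply, abs_mul, abs_of_nonneg (hH0 E)]
    calc |deriv N E| * H E
        ≤ (C * (1 + |E|) ^ k) * (3 * Real.exp (-(1 / (2 * T) * |E - μ|))) :=
          mul_le_mul (hN'b E) (hHle E) (hH0 E) (by positivity)
      _ ≤ (C * ((1 + |μ|) ^ k * (1 + |E - μ|) ^ k))
            * (3 * Real.exp (-(1 / (2 * T) * |E - μ|))) := by
          apply mul_le_mul_of_nonneg_right _ (by positivity)
          exact mul_le_mul_of_nonneg_left (one_add_abs_pow_le k μ E) hC.le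
      _ = 3 * C * (1 + |μ|) ^ k * ((1 + |E - μ|) ^ k
            * Real.exp (-(1 / (2 * T) * |E - μ|))) := by ring
  have hIntuv : Integrable (fun E : ℝ => N E * H E) := by
    apply ((integrable_poly_exp k μ (a := 1 / (2 * T)) (by positivity)).const_mul
      (3 * C * (1 + |μ|) ^ k)).mono' (hNc.mul hHc).aestronglyMeasurable
    filter_upwards with E
    rw [Real.norm_eq_abs, Pi.mul_apply, abs_mul, abs_of_nonneg (hH0 E)]
    calc |N E| * H E
        ≤ (C * (1 + |E|) ^ k) * (3 * Real.exp (-(1 / (2 * T) * |E - μ|))) :=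
          mul_le_mul (hNb E) (hHle E) (hH0 E) (by positivity)
      _ ≤ (C * ((1 + |μ|) ^ k * (1 + |E - μ|) ^ k))
            * (3 * Real.exp (-(1 / (2 * T) * |E - μ|))) := by
          apply mul_le_mul_of_nonneg_right _ (by positivity)
          exact mul_le_mul_of_nonneg_left (one_add_abs_pow_le k μ E) hC.le
      _ = 3 * C * (1 + |μ|) ^ k * ((1 + |E - μ|) ^ k
            * Real.exp (-(1 / (2 * T) * |E - μ|))) := by ring
  have hIntuv' : Integrable (fun E : ℝ => N E * (-(D E))) := by
    apply (hint.neg).congr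
    filter_upwards with E
    simp only [Pi.neg_apply]
    ring
  have hibp : (∫ E : ℝ, N E * (-(D E))) = -∫ E : ℝ, deriv N E * H E := by
    exact integral_mul_deriv_eq_deriv_mul_of_integrable
      (fun x _ => ((hN.differentiable (by norm_num)) x).hasDerivAt)
      (fun E _ => by simpa [hH, hD] using hasDerivAt_entropy μ T E hT.ne')
      hIntuv' hIntu'v hIntuv
  have heq : (∫ E : ℝ, deriv N E * H E) = ∫ E : ℝ, N E * ((E - μ) / T ^ 2
      * (Real.exp ((E - μ) / T) * ((1 + Real.exp ((E - μ) / T))⁻¹) ^ 2)) := by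
    have h2 : (∫ E : ℝ, N E * (-(D E))) = -∫ E : ℝ, N E * D E := by
      rw [← integral_neg]
      congr 1
      funext E
      ring
    rw [h2] at hibp
    have := neg_injective hibp
    rw [← this]
  rw [hH] at heq
  rw [heq]
  exact hder
end

section
/- (Jensen–Berezin trace inequality, matrix version.) Let n ≥ 1, let A be an n×n complex Hermitian matrix whose spectrum is contained in [0,1], let P be an n×n complex orthogonal projection matrix (P² = P = P*), and let h : [0,1] → ℝ be continuous and concave with h(0) = 0. Then Tr h(PAP) ≥ Tr( P · h(A) · P ), where h is applied via the functional calculus of Hermitian matrices. -/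
lemma jb_term_re (z : ℂ) (c : ℝ) : (star z * ↑c * z).re = c * Complex.normSq z := by
  simp [Complex.mul_re, Complex.mul_im, Complex.normSq_apply]; ring

lemma jb_diag_re {n : ℕ} (M : Matrix (Fin n) (Fin n) ℂ) (d : Fin n → ℝ) (j : Fin n) :
    ((star M * Matrix.diagonal (fun k => (d k : ℂ)) * M) j j).re
      = ∑ k, d k * Complex.normSq (M k j) := by
  simp only [Matrix.mul_assoc, Matrix.mul_apply, Matrix.diagonal_apply, ite_mul, zero_mul,
    Finset.sum_ite_eq, Finset.mem_univ, if_true, Matrix.star_apply, Complex.re_sum]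
  exact Finset.sum_congr rfl fun k _ => by
    simpa [mul_assoc] using jb_term_re (M k j) (d k)

lemma jb_gram_re {n : ℕ} (N : Matrix (Fin n) (Fin n) ℂ) (j : Fin n) :
    ((star N * N) j j).re = ∑ k, Complex.normSq (N k j) := by
  simp only [Matrix.mul_apply, Matrix.star_apply, Complex.re_sum]
  exact Finset.sum_congr rfl fun k _ => by simpa using jb_term_re (N k j) 1

open Finset in
lemma jb_jensen_sub {ι : Type*} [Fintype ι] (h : ℝ → ℝ)
    (hconc : ConcaveOn ℝ (Set.Icc (0:ℝ) 1) h) (h0 : h 0 = 0)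
    (w μ : ι → ℝ) (hw : ∀ k, 0 ≤ w k) (hw1 : ∑ k, w k ≤ 1)
    (hμ : ∀ k, μ k ∈ Set.Icc (0:ℝ) 1) :
    ∑ k, w k * h (μ k) ≤ h (∑ k, w k * μ k) := by
  set s := ∑ k, w k with hs
  have hs0 : 0 ≤ s := Finset.sum_nonneg fun k _ => hw k
  rcases eq_or_lt_of_le hs0 with hz | hpos
  · have hWz : ∀ k, w k = 0 := fun k =>
      (Finset.sum_eq_zero_iff_of_nonneg (fun k _ => hw k)).mp hz.symm k (Finset.mem_univ k)
    simp [hWz, h0]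
  · have key := hconc.le_map_sum (t := Finset.univ) (w := fun k => w k / s) (p := μ)
      (fun k _ => div_nonneg (hw k) hs0)
      (by rw [← Finset.sum_div, ← hs, div_self hpos.ne'])
      (fun k _ => hμ k)
    have hm : ∑ k, (w k / s) • μ k ∈ Set.Icc (0:ℝ) 1 :=
      (convex_Icc (0:ℝ) 1).sum_mem (fun k _ => div_nonneg (hw k) hs0)
        (by rw [← Finset.sum_div, ← hs, div_self hpos.ne']) (fun k _ => hμ k)
    have h2 : s * h (∑ k, (w k / s) • μ k) ≤ h (s * ∑ k, (w k / s) • μ k) := by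
      have := hconc.2 hm (Set.mem_Icc.mpr ⟨le_refl 0, zero_le_one⟩) hs0
        (by linarith : (0:ℝ) ≤ 1 - s) (by ring)
      simpa [h0, smul_eq_mul] using this
    have e1 : s * ∑ k, (w k / s) • μ k = ∑ k, w k * μ k := by
      rw [Finset.mul_sum]; congr 1; ext k; rw [smul_eq_mul]; field_simp
    have e2 : ∑ k, w k * h (μ k) = s * ∑ k, (w k / s) • h (μ k) := by
      rw [Finset.mul_sum]; congr 1; ext k; rw [smul_eq_mul]; field_simp
    calc ∑ k, w k * h (μ k) = s * ∑ k, (w k / s) • h (μ k) := e2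
      _ ≤ s * h (∑ k, (w k / s) • μ k) := by
          apply mul_le_mul_of_nonneg_left _ hs0
          simpa [smul_eq_mul] using key
      _ ≤ h (s * ∑ k, (w k / s) • μ k) := h2
      _ = h (∑ k, w k * μ k) := by rw [e1]

/-- Jensen–Berezin trace inequality (matrix version): for an `n×n` Hermitian matrix `A`
with spectrum in `[0,1]`, an orthogonal projection `P` and a continuous concave
function `h : [0,1] → ℝ` with `h 0 = 0`, one has `Tr h(PAP) ≥ Tr (P h(A) P)`, where
`h` is applied via the functional calculus of Hermitian matrices. -/
theorem jensen_berezin_trace_inequality (n : ℕ) (hn : 1 ≤ n)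
    (A P : Matrix (Fin n) (Fin n) ℂ)
    (hA : A.IsHermitian) (hspec : ∀ i, hA.eigenvalues i ∈ Set.Icc (0 : ℝ) 1)
    (hPproj : P * P = P) (hPherm : P.IsHermitian)
    (hPAP : (P * A * P).IsHermitian)
    (h : ℝ → ℝ) (hcont : ContinuousOn h (Set.Icc (0 : ℝ) 1))
    (hconc : ConcaveOn ℝ (Set.Icc (0 : ℝ) 1) h) (h0 : h 0 = 0) :
    ((P * hA.cfc h * P).trace).re ≤ ((hPAP.cfc h).trace).re := by
  classical
  set V : Matrix (Fin n) (Fin n) ℂ := ↑(hA.eigenvectorUnitary) with hV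
  set W : Matrix (Fin n) (Fin n) ℂ := ↑(hPAP.eigenvectorUnitary) with hW
  have hVV : V * star V = 1 := Matrix.mem_unitaryGroup_iff.mp hA.eigenvectorUnitary.2
  have hWW : W * star W = 1 := Matrix.mem_unitaryGroup_iff.mp hPAP.eigenvectorUnitary.2
  have hWW' : star W * W = 1 := Matrix.mem_unitaryGroup_iff'.mp hPAP.eigenvectorUnitary.2
  set μ : Fin n → ℝ := hA.eigenvalues with hμdef
  set lam : Fin n → ℝ := hPAP.eigenvalues with hlamdef
  set M : Matrix (Fin n) (Fin n) ℂ := star V * P * W with hM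
  have hPst : star P = P := hPherm
  have hMst : star M = star W * P * V := by
    rw [hM]
    calc star (star V * P * W) = star W * (star P * star (star V)) := by
          simp only [StarMul.star_mul, Matrix.mul_assoc]
      _ = star W * P * V := by rw [hPst, star_star, Matrix.mul_assoc]
  -- RHS trace
  have hRHS : ((hPAP.cfc h).trace).re = ∑ j, h (lam j) := by
    rw [Matrix.IsHermitian.cfc, Unitary.conjStarAlgAut_apply, Matrix.trace_mul_cycle, hWW', one_mul, Matrix.trace_diagonal]
    simp [Complex.re_sum, Function.comp]
    rfl
  -- LHS trace
  set Dh : Matrix (Fin n) (Fin n) ℂ := Matrix.diagonal (fun k => ((h (μ k) : ℝ) : ℂ)) with hDh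
  have hid1 : star W * (P * hA.cfc h * P) * W = star M * Dh * M := by
    rw [Matrix.IsHermitian.cfc, hMst, hM, hDh]
    show star W * (P * (V * Matrix.diagonal _ * star V) * P) * W
        = star W * P * V * Matrix.diagonal _ * (star V * P * W)
    simp only [Matrix.mul_assoc]
    rfl
  have hLHS : ((P * hA.cfc h * P).trace).re
      = ∑ j, ((star M * Dh * M) j j).re := by
    have ht : (P * hA.cfc h * P).trace = (star M * Dh * M).trace := by
      rw [← hid1, Matrix.trace_mul_cycle (star W) (P * hA.cfc h * P) W, hWW, one_mul]
    rw [ht, Matrix.trace]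
    simp [Complex.re_sum, Matrix.diag]
  -- eigenvalue identity
  set Dμ : Matrix (Fin n) (Fin n) ℂ := Matrix.diagonal (fun k => ((μ k : ℝ) : ℂ)) with hDμ
  have hid2 : star M * Dμ * M = Matrix.diagonal (RCLike.ofReal ∘ lam) := by
    have hBd : star W * (P * A * P) * W = Matrix.diagonal (RCLike.ofReal ∘ lam) := by
      have := hPAP.conjStarAlgAut_star_eigenvectorUnitary
      simpa [Unitary.conjStarAlgAut_star_apply] using this
    calc star M * Dμ * M = star W * (P * A * P) * W := by
          conv_rhs => rw [hA.spectral_theorem]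
          rw [hMst, hM, hDμ]
          show star W * P * V * Matrix.diagonal _ * (star V * P * W)
              = star W * (P * (V * Matrix.diagonal _ * star V) * P) * W
          simp only [Matrix.mul_assoc]
          rfl
      _ = Matrix.diagonal (RCLike.ofReal ∘ lam) := hBd
  have hlam : ∀ j, ∑ k, μ k * Complex.normSq (M k j) = lam j := by
    intro j
    have := congrArg (fun X : Matrix (Fin n) (Fin n) ℂ => (X j j).re) hid2
    simpa [hDμ, jb_diag_re, Matrix.diagonal_apply_eq, Function.comp] using this
  -- weight bound
  have hQQ : (1 - P) * (1 - P) = (1 - P) := by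
    simp [Matrix.mul_sub, Matrix.sub_mul, hPproj]
  have hQst : star ((1 - P) * W) = star W * (1 - P) := by
    simp only [StarMul.star_mul]
    rw [star_sub, star_one, hPst]
  have hMM : star M * M = star W * (P * W) := by
    have hstep : V * (star V * (P * W)) = P * W := by
      rw [← Matrix.mul_assoc, hVV, one_mul]
    calc star M * M = star W * (P * (V * (star V * (P * W)))) := by
          rw [hMst, hM]; simp only [Matrix.mul_assoc]
      _ = star W * (P * (P * W)) := by rw [hstep]
      _ = star W * (P * W) := by rw [← Matrix.mul_assoc P P W, hPproj]
  have hQgram : star W * ((1 - P) * W) = star ((1 - P) * W) * ((1 - P) * W) := by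
    calc star W * ((1 - P) * W) = star W * (((1 - P) * (1 - P)) * W) := by rw [hQQ]
      _ = star W * (1 - P) * ((1 - P) * W) := by simp only [Matrix.mul_assoc]
      _ = star ((1 - P) * W) * ((1 - P) * W) := by rw [hQst]
  have hsplit : star M * M + star W * ((1 - P) * W) = 1 := by
    rw [hMM, ← Matrix.mul_add, ← Matrix.add_mul]
    simp [hWW']
  have hsum_le : ∀ j, ∑ k, Complex.normSq (M k j) ≤ 1 := by
    intro j
    have h1 : ((star M * M) j j).re + ((star W * ((1 - P) * W)) j j).re = 1 := by
      have := congrArg (fun X : Matrix (Fin n) (Fin n) ℂ => (X j j).re) hsplit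
      simpa [Matrix.add_apply, Matrix.one_apply_eq] using this
    have h2 : 0 ≤ ((star W * ((1 - P) * W)) j j).re := by
      rw [hQgram, jb_gram_re]
      exact Finset.sum_nonneg fun k _ => Complex.normSq_nonneg _
    rw [← jb_gram_re M j]
    linarith
  -- per-column Jensen
  have hperj : ∀ j, ((star M * Dh * M) j j).re ≤ h (lam j) := by
    intro j
    rw [hDh, jb_diag_re]
    have hj := jb_jensen_sub h hconc h0 (fun k => Complex.normSq (M k j)) μ
      (fun k => Complex.normSq_nonneg _) (hsum_le j) (fun k => hspec k)
    calc ∑ k, h (μ k) * Complex.normSq (M k j)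
        = ∑ k, Complex.normSq (M k j) * h (μ k) := by
          exact Finset.sum_congr rfl fun k _ => mul_comm _ _
      _ ≤ h (∑ k, Complex.normSq (M k j) * μ k) := hj
      _ = h (lam j) := by
          rw [show ∑ k, Complex.normSq (M k j) * μ k = ∑ k, μ k * Complex.normSq (M k j) from
            Finset.sum_congr rfl fun k _ => mul_comm _ _, hlam j]
  rw [hLHS, hRHS]
  exact Finset.sum_le_sum fun j _ => hperj j
end
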